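/- arXiv:1812.07199 — 5 statements merged into one kernel-verified Lean document; each statement's English description precedes it below -/
import Mathlib

section
/- Let A = (a_{ij}) be an l×l complex matrix, λ = (λ_1,…,λ_l) ∈ ℂ^l, and d = (d_1,…,d_l) positive integers. Define M(A,λ,d) to be the (d_1+⋯+d_l)-square block matrix whose (i,j) block is a_{ij} J_{d_i×d_j} plus λ_i I_{d_i} on the diagonal blocks, and define the l×l matrix M̄(A,λ,d) = diag(d_1,…,d_l)·A + diag(λ_1,…,λ_l). Then χ_{M(A,λ,d)}(t) = χ_{M̄(A,λ,d)}(t) · ∏_{i=1}^l (t − λ_i)^{d_i−1}, and in particular det M(A,λ,d) = det M̄(A,λ,d) · ∏_{i=1}^l λ_i^{d_i−1}. -/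
open Matrix

variable {R : Type*} [CommRing R]

lemma key_sum {ι κ : Type*} [Fintype ι] [Fintype κ] [DecidableEq ι] [DecidableEq κ]
    (A : Matrix ι ι R) (lam : ι → R) (f : κ → ι) (c : ι → R)
    (hc : ∀ i, (∑ k : κ, if f k = i then (1 : R) else 0) = c i) :
    (Matrix.of (fun s t : ι ⊕ κ => A (Sum.elim id f s) (Sum.elim id f t))
      + Matrix.diagonal (fun s => lam (Sum.elim id f s))).det
    = (Matrix.of (fun i j => (1 + c i) * A i j) + Matrix.diagonal lam).det
        * ∏ k : κ, lam (f k) := by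
  classical
  set B : Matrix ι κ R := Matrix.of fun i k => if f k = i then (1:R) else 0 with hB
  set M11 : Matrix ι ι R := A + Matrix.diagonal lam with hM11
  set M12 : Matrix ι κ R := Matrix.of fun i k => A i (f k) with hM12
  set M21 : Matrix κ ι R := Matrix.of fun k j => A (f k) j with hM21
  set M22 : Matrix κ κ R := Matrix.of (fun k k' => A (f k) (f k'))
      + Matrix.diagonal (fun k => lam (f k)) with hM22
  set Mbar : Matrix ι ι R := Matrix.of (fun i j => (1 + c i) * A i j)
      + Matrix.diagonal lam with hMbar
  have hM' : (Matrix.of (fun s t : ι ⊕ κ => A (Sum.elim id f s) (Sum.elim id f t))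
      + Matrix.diagonal (fun s => lam (Sum.elim id f s)))
      = Matrix.fromBlocks M11 M12 M21 M22 := by
    ext s t
    rcases s with i | k <;> rcases t with j | k' <;>
      simp [Matrix.diagonal_apply, Matrix.fromBlocks, hM11, hM12, hM21, hM22]
  set P : Matrix (ι ⊕ κ) (ι ⊕ κ) R := Matrix.fromBlocks 1 B 0 1 with hP
  set Q : Matrix (ι ⊕ κ) (ι ⊕ κ) R := Matrix.fromBlocks 1 (-B) 0 1 with hQ
  have hdetP : P.det = 1 := by rw [hP, Matrix.det_fromBlocks_zero₂₁]; simp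
  have hdetQ : Q.det = 1 := by rw [hQ, Matrix.det_fromBlocks_zero₂₁]; simp
  -- auxiliary multiplication facts
  have hsum : ∀ (i j : ι), (∑ k : κ, (if f k = i then (1:R) else 0) * A (f k) j)
      = c i * A i j := by
    intro i j
    have h1 : ∀ k : κ, (if f k = i then (1:R) else 0) * A (f k) j
        = (if f k = i then (1:R) else 0) * A i j := by
      intro k; split_ifs with h
      · rw [h]
      · simp
    rw [Finset.sum_congr rfl (fun k _ => h1 k), ← Finset.sum_mul, hc]
  have hXB : ∀ X : Matrix ι ι R, X * B = Matrix.of (fun i k => X i (f k)) := by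
    intro X; ext i k
    simp [Matrix.mul_apply, hB, mul_ite, Finset.sum_ite_eq]
  have hM21B : M21 * B = Matrix.of (fun k k' => A (f k) (f k')) := by
    ext k k'
    simp [Matrix.mul_apply, hB, hM21, mul_ite, Finset.sum_ite_eq]
  have hBM21 : B * M21 = Matrix.of (fun i j => c i * A i j) := by
    ext i j
    simp only [Matrix.mul_apply, hB, hM21, Matrix.of_apply]
    exact hsum i j
  have hBM22 : B * M22 = Matrix.of (fun i k' => c i * A i (f k')
      + (if f k' = i then lam i else 0)) := by
    rw [hM22, Matrix.mul_add]
    have h2 : B * Matrix.of (fun k k' => A (f k) (f k'))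
        = Matrix.of (fun i k' => c i * A i (f k')) := by
      ext i k'
      simp only [Matrix.mul_apply, hB, Matrix.of_apply]
      exact hsum i (f k')
    have h3 : B * Matrix.diagonal (fun k => lam (f k))
        = Matrix.of (fun i k' => if f k' = i then lam i else 0) := by
      ext i k'
      rw [Matrix.mul_diagonal]
      simp only [hB, Matrix.of_apply]
      split_ifs with h
      · rw [h]; ring
      · ring
    rw [h2, h3]
    ext i k'
    simp
  have hMbarB : Mbar * B = M12 + B * M22 := by
    rw [hXB Mbar, hBM22]
    ext i k
    simp only [hMbar, hM12, Matrix.of_apply, Matrix.add_apply, Matrix.diagonal_apply]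
    by_cases h : f k = i
    · simp [h]; ring
    · have h' : ¬ i = f k := fun hh => h hh.symm
      simp [h, h']; ring
  -- the product P * (fromBlocks ...) * Q
  have e1 : P * Matrix.fromBlocks M11 M12 M21 M22
      = Matrix.fromBlocks Mbar (M12 + B * M22) M21 M22 := by
    rw [hP, Matrix.fromBlocks_multiply, hBM21]
    have h4 : M11 + Matrix.of (fun i j => c i * A i j) = Mbar := by
      ext i j
      simp only [hM11, hMbar, Matrix.add_apply, Matrix.of_apply, Matrix.diagonal_apply]
      ring
    simp only [Matrix.one_mul, Matrix.zero_mul, Matrix.mul_one, Matrix.mul_zero,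
      add_zero, zero_add, h4]
  have e2 : Matrix.fromBlocks Mbar (M12 + B * M22) M21 M22 * Q
      = Matrix.fromBlocks Mbar 0 M21 (Matrix.diagonal (fun k => lam (f k))) := by
    rw [hQ, Matrix.fromBlocks_multiply]
    have h5 : Mbar * (-B) + (M12 + B * M22) = 0 := by
      rw [Matrix.mul_neg, hMbarB]; abel
    have h6 : M21 * (-B) + M22 = Matrix.diagonal (fun k => lam (f k)) := by
      rw [Matrix.mul_neg, hM21B, hM22]; abel
    simp only [Matrix.one_mul, Matrix.zero_mul, Matrix.mul_one, Matrix.mul_zero,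
      add_zero, zero_add, h5, h6]
  have hdet : (Matrix.fromBlocks M11 M12 M21 M22).det
      = (P * Matrix.fromBlocks M11 M12 M21 M22 * Q).det := by
    rw [Matrix.det_mul, Matrix.det_mul, hdetP, hdetQ]; ring
  rw [hM', hdet, e1, e2, Matrix.det_fromBlocks_zero₁₂, Matrix.det_diagonal]

lemma key_sigma (l : ℕ) (A : Matrix (Fin l) (Fin l) R) (lam : Fin l → R)
    (d : Fin l → ℕ) (hd : ∀ i, 0 < d i) :
    (Matrix.of (fun p q : Σ i : Fin l, Fin (d i) => A p.1 q.1)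
      + Matrix.diagonal (fun p : Σ i : Fin l, Fin (d i) => lam p.1)).det
    = (Matrix.of (fun i j => (d i : R) * A i j) + Matrix.diagonal lam).det
        * ∏ i : Fin l, lam i ^ (d i - 1) := by
  classical
  set e : (Fin l ⊕ (Σ i : Fin l, Fin (d i - 1))) ≃ (Σ i : Fin l, Fin (d i)) :=
    { toFun := Sum.elim (fun i => ⟨i, ⟨0, hd i⟩⟩)
        (fun k => ⟨k.1, ⟨k.2 + 1, by omega⟩⟩)
      invFun := fun p => if h : (p.2 : ℕ) = 0 then Sum.inl p.1
        else Sum.inr ⟨p.1, ⟨(p.2 : ℕ) - 1, by omega⟩⟩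
      left_inv := by
        rintro (i | ⟨i, k⟩) <;> simp
      right_inv := by
        rintro ⟨i, m⟩
        by_cases h : (m : ℕ) = 0
        · simp [h]; exact Fin.ext h.symm
        · simp [h]
          exact Fin.ext (by simp; omega) } with he
  have hfst : ∀ s : Fin l ⊕ (Σ i : Fin l, Fin (d i - 1)),
      (e s).1 = Sum.elim id Sigma.fst s := by
    rintro (i | ⟨i, k⟩) <;> rfl
  have hsub : (Matrix.of (fun p q : Σ i : Fin l, Fin (d i) => A p.1 q.1)
        + Matrix.diagonal (fun p : Σ i : Fin l, Fin (d i) => lam p.1)).submatrix e e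
      = Matrix.of (fun s t => A (Sum.elim id Sigma.fst s) (Sum.elim id Sigma.fst t))
        + Matrix.diagonal (fun s => lam (Sum.elim id Sigma.fst s)) := by
    ext s t
    simp only [Matrix.submatrix_apply, Matrix.add_apply, Matrix.of_apply,
      Matrix.diagonal_apply, hfst, EmbeddingLike.apply_eq_iff_eq]
  have hcard : ∀ i : Fin l, (∑ k : Σ i' : Fin l, Fin (d i' - 1),
      if k.1 = i then (1 : R) else 0) = ((d i - 1 : ℕ) : R) := by
    intro i
    rw [← Finset.univ_sigma_univ, Finset.sum_sigma]
    have h0 : ∀ x : Fin l, (∑ b : Fin (d x - 1),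
        if (⟨x, b⟩ : Σ i' : Fin l, Fin (d i' - 1)).1 = i then (1:R) else 0)
        = if x = i then ((d x - 1 : ℕ) : R) else 0 := by
      intro x
      by_cases h : x = i <;> simp [h, Finset.card_univ]
    rw [Finset.sum_congr rfl (fun x _ => h0 x), Finset.sum_ite_eq' Finset.univ i]
    simp
  rw [← Matrix.det_submatrix_equiv_self e, hsub,
    key_sum A lam Sigma.fst (fun i => ((d i - 1 : ℕ) : R)) hcard]
  have h7 : (fun i j => (1 + ((d i - 1 : ℕ) : R)) * A i j)
      = fun i j => (d i : R) * A i j := by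
    funext i j
    have h : (1 : R) + ((d i - 1 : ℕ) : R) = ((d i : ℕ) : R) := by
      rw [← Nat.cast_one, ← Nat.cast_add]
      congr 1
      have := hd i
      omega
    rw [h]
  have h8 : (∏ k : Σ i : Fin l, Fin (d i - 1), lam k.1)
      = ∏ i : Fin l, lam i ^ (d i - 1) := by
    rw [← Finset.univ_sigma_univ, Finset.prod_sigma]
    simp [Finset.prod_const, Finset.card_univ]
  rw [h7, h8]

/-- For the block matrix `M(A, λ, d)` whose `(i,j)` block is `a_{ij} J_{d_i × d_j}`,
plus `λ_i I_{d_i}` on the diagonal blocks, with `M̄(A, λ, d) = diag(d) A + diag(λ)`: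
`χ_M(t) = χ_M̄(t) ∏ i (t - λ_i)^(d_i - 1)` and
`det M = det M̄ ∏ i λ_i^(d_i - 1)`. -/
theorem stmt_3 (l : ℕ) (A : Matrix (Fin l) (Fin l) ℂ) (lam : Fin l → ℂ)
    (d : Fin l → ℕ) (hd : ∀ i, 0 < d i) :
    let M : Matrix (Σ i : Fin l, Fin (d i)) (Σ i : Fin l, Fin (d i)) ℂ :=
      Matrix.of (fun p q => A p.1 q.1) + Matrix.diagonal (fun p => lam p.1)
    let Mbar : Matrix (Fin l) (Fin l) ℂ :=
      Matrix.of (fun i j => (d i : ℂ) * A i j) + Matrix.diagonal lam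
    M.charpoly = Mbar.charpoly *
        ∏ i : Fin l, (Polynomial.X - Polynomial.C (lam i)) ^ (d i - 1) ∧
    M.det = Mbar.det * ∏ i : Fin l, lam i ^ (d i - 1) := by
  intro M Mbar
  classical
  constructor
  · have h1 : M.charmatrix
        = Matrix.of (fun p q : Σ i : Fin l, Fin (d i) =>
            (-(A.map Polynomial.C)) p.1 q.1)
          + Matrix.diagonal (fun p : Σ i : Fin l, Fin (d i) =>
            Polynomial.X - Polynomial.C (lam p.1)) := by
      ext p q
      by_cases h : p = q
      · subst h
        simp [Matrix.charmatrix_apply_eq, M, Matrix.diagonal_apply]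
        ring
      · simp [Matrix.charmatrix_apply_ne _ _ _ h, M, Matrix.diagonal_apply, h]
    have h2 : Mbar.charmatrix
        = Matrix.of (fun i j => ((d i : ℕ) : Polynomial ℂ) * (-(A.map Polynomial.C)) i j)
          + Matrix.diagonal (fun i => Polynomial.X - Polynomial.C (lam i)) := by
      ext i j
      by_cases h : i = j
      · subst h
        simp [Matrix.charmatrix_apply_eq, Mbar, Matrix.diagonal_apply]
        ring
      · simp [Matrix.charmatrix_apply_ne _ _ _ h, Mbar, Matrix.diagonal_apply, h]
    rw [Matrix.charpoly, Matrix.charpoly, h1, h2]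
    exact key_sigma l (-(A.map Polynomial.C)) (fun i => Polynomial.X - Polynomial.C (lam i)) d hd
  · exact key_sigma l A lam d hd
end

section
/- Let C = (C^{ij})_{1≤i,j≤l} be an nl×nl block matrix where each block C^{ij} is an n×n circulant matrix. For 0 ≤ k ≤ n−1 let C̄_k be the l×l matrix whose (i,j) entry is the eigenvalue of C^{ij} associated to the eigenvector z_{n,k} = (ζ_n^{sk})_{0≤s≤n−1}. Then the characteristic polynomial of C is χ_C(t) = ∏_{k=0}^{n−1} χ_{C̄_k}(t), and det C = ∏_{k=0}^{n−1} det C̄_k. -/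
open Matrix Polynomial

lemma zeta_pow_mod {n : ℕ} [NeZero n] {ζ : ℂ} (hζ : IsPrimitiveRoot ζ n)
    (x k : ℕ) : ζ ^ ((x % n) * k) = ζ ^ (x * k) := by
  have hx : x * k = x % n * k + n * (x / n * k) := by
    conv_lhs => rw [← Nat.mod_add_div x n]
    ring
  rw [hx, pow_add, pow_mul ζ n, hζ.pow_eq_one, one_pow, mul_one]

lemma charmatrix_blockDiagonal {m o R : Type*} [DecidableEq m] [DecidableEq o]
    [Fintype m] [Fintype o] [CommRing R] (M : o → Matrix m m R) :
    charmatrix (blockDiagonal M) = blockDiagonal fun k => charmatrix (M k) := by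
  ext ⟨i, s⟩ ⟨j, k⟩
  by_cases h : s = k
  · subst h
    by_cases h2 : i = j <;>
      simp [charmatrix_apply, blockDiagonal_apply, diagonal_apply, Prod.ext_iff, h2]
  · simp [charmatrix_apply, blockDiagonal_apply, diagonal_apply, Prod.ext_iff, h]

/-- Block matrices with circulant blocks: the characteristic polynomial (resp.
determinant) of the block matrix `C = (C^{ij})` with `n × n` circulant blocks is the
product over `k` of the characteristic polynomials (resp. determinants) of the `l × l`
matrices `C̄_k` whose `(i,j)` entry is the eigenvalue of `C^{ij}` on `z_{n,k}`. -/
theorem stmt_4 (l n : ℕ) [NeZero n]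
    (Cb : Fin l → Fin l → Matrix (Fin n) (Fin n) ℂ)
    (hCb : ∀ i j (s t : Fin n), Cb i j s t = Cb i j 0 (t - s))
    (ζ : ℂ) (hζ : IsPrimitiveRoot ζ n) :
    let C : Matrix (Fin l × Fin n) (Fin l × Fin n) ℂ :=
      Matrix.of fun p q => Cb p.1 q.1 p.2 q.2
    let Cbar : Fin n → Matrix (Fin l) (Fin l) ℂ := fun k =>
      Matrix.of fun i j => ∑ s : Fin n, Cb i j 0 s * ζ ^ ((s : ℕ) * (k : ℕ))
    C.charpoly = ∏ k : Fin n, (Cbar k).charpoly ∧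
    C.det = ∏ k : Fin n, (Cbar k).det := by
  intro C Cbar
  -- the DFT matrix
  set F : Matrix (Fin n) (Fin n) ℂ := Matrix.of fun s t => ζ ^ ((s : ℕ) * (t : ℕ)) with hF
  have hFvdm : F = (Matrix.vandermonde fun s : Fin n => ζ ^ (s : ℕ)) := by
    ext s t
    simp [hF, vandermonde, ← pow_mul]
  have hFdet : F.det ≠ 0 := by
    rw [hFvdm, Matrix.det_vandermonde]
    refine Finset.prod_ne_zero_iff.2 fun i _ => Finset.prod_ne_zero_iff.2 fun j hj => ?_
    rw [Finset.mem_Ioi] at hj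
    rw [sub_ne_zero]
    intro h
    exact absurd (hζ.pow_inj j.isLt i.isLt h) (by omega)
  set U : Matrix (Fin l × Fin n) (Fin l × Fin n) ℂ :=
    Matrix.kroneckerMap (· * ·) (1 : Matrix (Fin l) (Fin l) ℂ) F with hU
  have hUdet : U.det ≠ 0 := by
    rw [hU, Matrix.det_kronecker]
    simp [hFdet, pow_ne_zero]
  set D : Matrix (Fin l × Fin n) (Fin l × Fin n) ℂ := Matrix.blockDiagonal Cbar with hD
  -- the key intertwining relation
  have key : C * U = U * D := by
    ext ⟨i, s⟩ ⟨j, k⟩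
    rw [Matrix.mul_apply, Matrix.mul_apply]
    rw [Fintype.sum_prod_type, Fintype.sum_prod_type]
    have hR : ∀ j' : Fin l, ∑ t : Fin n, U (i, s) (j', t) * D (j', t) (j, k)
        = (1 : Matrix (Fin l) (Fin l) ℂ) i j' * (ζ ^ ((s : ℕ) * (k : ℕ)) * Cbar k j' j) := by
      intro j'
      rw [Finset.sum_eq_single k]
      · have h1 : U (i, s) (j', k) = (1 : Matrix (Fin l) (Fin l) ℂ) i j' * ζ ^ ((s : ℕ) * (k : ℕ)) := rfl
        have h2 : D (j', k) (j, k) = Cbar k j' j := Matrix.blockDiagonal_apply_eq Cbar j' j k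
        rw [h1, h2, mul_assoc]
      · intro t _ ht
        simp [hU, hD, Matrix.blockDiagonal_apply, ht]
      · simp
    have hL : ∀ j' : Fin l, ∑ t : Fin n, C (i, s) (j', t) * U (j', t) (j, k)
        = (1 : Matrix (Fin l) (Fin l) ℂ) j' j * ∑ t : Fin n, Cb i j' s t * ζ ^ ((t : ℕ) * (k : ℕ)) := by
      intro j'
      rw [Finset.mul_sum]
      refine Finset.sum_congr rfl fun t _ => ?_
      simp only [hU, hF, kroneckerMap_apply, Matrix.of_apply, C]
      ring
    simp only [hL, hR]
    rw [Finset.sum_eq_single j, Finset.sum_eq_single i]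
    · rw [Matrix.one_apply_eq, Matrix.one_apply_eq, one_mul, one_mul]
      -- the circulant computation
      have : ∀ t : Fin n, Cb i j s t = Cb i j 0 (t - s) := hCb i j s
      calc ∑ t : Fin n, Cb i j s t * ζ ^ ((t : ℕ) * (k : ℕ))
          = ∑ u : Fin n, Cb i j s (u + s) * ζ ^ (((u + s : Fin n) : ℕ) * (k : ℕ)) :=
            (Fintype.sum_equiv (Equiv.addRight s) _ _ (fun u => rfl)).symm
        _ = ∑ u : Fin n, Cb i j 0 u * (ζ ^ ((s : ℕ) * (k : ℕ)) * ζ ^ ((u : ℕ) * (k : ℕ))) := by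
            refine Finset.sum_congr rfl fun u _ => ?_
            rw [hCb i j s (u + s), add_sub_cancel_right]
            congr 1
            have : ((u + s : Fin n) : ℕ) = ((u : ℕ) + (s : ℕ)) % n := Fin.val_add u s
            rw [this, zeta_pow_mod hζ, add_mul, pow_add, mul_comm]
        _ = ζ ^ ((s : ℕ) * (k : ℕ)) * ∑ u : Fin n, Cb i j 0 u * ζ ^ ((u : ℕ) * (k : ℕ)) := by
            rw [Finset.mul_sum]; exact Finset.sum_congr rfl fun u _ => by ring
        _ = ζ ^ ((s : ℕ) * (k : ℕ)) * Cbar k i j := rfl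
    · intro i' _ hi'
      rw [Matrix.one_apply_ne' hi', zero_mul]
    · simp
    · intro j' _ hj'
      rw [Matrix.one_apply_ne hj', zero_mul]
    · simp
  -- determinant part
  have hdet : C.det = ∏ k : Fin n, (Cbar k).det := by
    have h1 : C.det * U.det = U.det * D.det := by
      rw [← Matrix.det_mul, ← Matrix.det_mul, key]
    rw [mul_comm (U.det)] at h1
    have := mul_right_cancel₀ hUdet h1
    rw [this, hD, Matrix.det_blockDiagonal]
  -- charpoly part
  have hchar : C.charpoly = ∏ k : Fin n, (Cbar k).charpoly := by
    set f : ℂ →+* ℂ[X] := Polynomial.C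
    have keyP : charmatrix C * U.map f = U.map f * charmatrix D := by
      have hmap : C.map f * U.map f = U.map f * D.map f := by
        rw [← Matrix.map_mul, ← Matrix.map_mul, key]
      have hsc : ∀ M : Matrix (Fin l × Fin n) (Fin l × Fin n) ℂ[X],
          Matrix.scalar _ (X : ℂ[X]) * M = M * Matrix.scalar _ (X : ℂ[X]) :=
        fun M => (Matrix.scalar_commute (X : ℂ[X]) (fun r => Commute.all _ _) M).eq
      calc charmatrix C * U.map f
          = Matrix.scalar _ (X : ℂ[X]) * U.map f - C.map f * U.map f := by
            rw [charmatrix, sub_mul]; rfl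
        _ = U.map f * Matrix.scalar _ (X : ℂ[X]) - U.map f * D.map f := by
            rw [hsc, hmap]
        _ = U.map f * charmatrix D := by
            rw [charmatrix, mul_sub]; rfl
    have h1 : (charmatrix C).det * Polynomial.C U.det = Polynomial.C U.det * (charmatrix D).det := by
      have := congrArg Matrix.det keyP
      rw [Matrix.det_mul, Matrix.det_mul] at this
      rwa [show (U.map ⇑f).det = Polynomial.C U.det from by
        rw [← RingHom.mapMatrix_apply, ← RingHom.map_det]] at this
    rw [mul_comm (Polynomial.C U.det)] at h1
    have h2 := mul_right_cancel₀ (fun h => hUdet (by simpa using h : U.det = 0)) h1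
    have : C.charpoly = D.charpoly := h2
    rw [this, Matrix.charpoly, hD, charmatrix_blockDiagonal, Matrix.det_blockDiagonal]
    rfl
  exact ⟨hchar, hdet⟩
end

section
/- (Moon's formula) Let F be a spanning forest of the complete graph K_n with connected components of vertex sizes j_1, …, j_k. The number of spanning trees of K_n containing all edges of F is n^{k−2} ∏_{i=1}^k j_i. -/
open SimpleGraph

variable {V : Type*}

lemma reachable_sup_edge_iff {G : SimpleGraph V} {u v : V} (hne : u ≠ v) (x y : V) :
    (G ⊔ edge u v).Reachable x y ↔
      G.Reachable x y ∨ (G.Reachable x u ∧ G.Reachable v y) ∨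
        (G.Reachable x v ∧ G.Reachable u y) := by
  constructor
  · rintro ⟨w⟩
    induction w with
    | nil => exact Or.inl (Reachable.refl _)
    | @cons a b c h p ih =>
      rw [sup_adj, edge_adj] at h
      rcases h with h' | ⟨(⟨rfl, rfl⟩ | ⟨rfl, rfl⟩), _⟩
      · have hab : G.Reachable a b := h'.reachable
        rcases ih with h1 | ⟨h1, h2⟩ | ⟨h1, h2⟩
        · exact Or.inl (hab.trans h1)
        · exact Or.inr (Or.inl ⟨hab.trans h1, h2⟩)
        · exact Or.inr (Or.inr ⟨hab.trans h1, h2⟩)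
      · rcases ih with h1 | ⟨h1, h2⟩ | ⟨h1, h2⟩
        · exact Or.inr (Or.inl ⟨Reachable.refl _, h1⟩)
        · exact Or.inl (h1.symm.trans h2)
        · exact Or.inl h2
      · rcases ih with h1 | ⟨h1, h2⟩ | ⟨h1, h2⟩
        · exact Or.inr (Or.inr ⟨Reachable.refl _, h1⟩)
        · exact Or.inl h2
        · exact Or.inl (h1.symm.trans h2)
  · have hle : G ≤ G ⊔ edge u v := le_sup_left
    have huv : (G ⊔ edge u v).Reachable u v := by
      exact Adj.reachable (by rw [sup_adj, edge_adj]; exact Or.inr ⟨Or.inl ⟨rfl, rfl⟩, hne⟩)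
    rintro (h | ⟨h1, h2⟩ | ⟨h1, h2⟩)
    · exact h.mono hle
    · exact ((h1.mono hle).trans huv).trans (h2.mono hle)
    · exact ((h1.mono hle).trans huv.symm).trans (h2.mono hle)

lemma adj_of_le_of_reachable {G T : SimpleGraph V} (hT : T.IsAcyclic) (hle : G ≤ T)
    {x y : V} (hadj : T.Adj x y) (hr : G.Reachable x y) : G.Adj x y := by
  by_contra hG
  have hb : ¬ (T \ fromEdgeSet {s(x, y)}).Reachable x y := (isAcyclic_iff_forall_adj_isBridge.mp hT hadj)
  apply hb
  refine hr.mono fun a b hab => ?_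
  rw [sdiff_adj]
  refine ⟨hle hab, ?_⟩
  rw [fromEdgeSet_adj]
  rintro ⟨h, -⟩
  rw [Set.mem_singleton_iff, Sym2.eq_iff] at h
  rcases h with ⟨rfl, rfl⟩ | ⟨rfl, rfl⟩
  · exact hG hab
  · exact hG hab.symm

lemma acyclic_sup_edge {G : SimpleGraph V} {u v : V} (hG : G.IsAcyclic)
    (huv : ¬G.Reachable u v) : (G ⊔ edge u v).IsAcyclic := by
  have hne : u ≠ v := fun h => huv (h ▸ Reachable.refl u)
  rw [isAcyclic_iff_forall_adj_isBridge]
  intro x y hadj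
  intro hr
  rcases (sup_adj _ _ _ _).mp hadj with hxy | hxy
  · -- x y adjacent in G
    set D := G \ fromEdgeSet {s(x, y)} with hD
    have hb := (isAcyclic_iff_forall_adj_isBridge.mp hG hxy)
    have hle : (G ⊔ edge u v) \ fromEdgeSet {s(x, y)} ≤ D ⊔ edge u v := by
      intro a b hab
      rw [sdiff_adj] at hab
      rcases (sup_adj _ _ _ _).mp hab.1 with h | h
      · exact Or.inl ⟨h, hab.2⟩
      · exact Or.inr h
    have hr' := hr.mono hle
    have hDle : D ≤ G := sdiff_le
    rcases (reachable_sup_edge_iff hne x y).mp hr' with h | ⟨h1, h2⟩ | ⟨h1, h2⟩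
    · exact hb h
    · exact huv (((h1.mono hDle).symm.trans hxy.reachable).trans (h2.mono hDle).symm)
    · exact huv ((h2.mono hDle).trans (hxy.symm.reachable.trans (h1.mono hDle)))
  · -- the new edge
    rw [edge_adj] at hxy
    have hle : (G ⊔ edge u v) \ fromEdgeSet {s(x, y)} ≤ G := by
      intro a b hab
      rw [sdiff_adj] at hab
      rcases (sup_adj _ _ _ _).mp hab.1 with h | h
      · exact h
      · exfalso
        rw [edge_adj] at h
        apply hab.2
        rw [fromEdgeSet_adj]
        refine ⟨?_, h.2⟩
        rcases h.1 with ⟨rfl, rfl⟩ | ⟨rfl, rfl⟩ <;> rcases hxy.1 with ⟨rfl, rfl⟩ | ⟨rfl, rfl⟩ <;>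
          simp [Sym2.eq_swap]
    rcases hxy.1 with ⟨rfl, rfl⟩ | ⟨rfl, rfl⟩
    · exact huv (hr.mono hle)
    · exact huv (hr.mono hle).symm


section Merge

variable {G : SimpleGraph V} {u v : V}

private lemma mk_ne_mk (huv : ¬G.Reachable u v) :
    G.connectedComponentMk u ≠ G.connectedComponentMk v := by
  rw [Ne, ConnectedComponent.eq]; exact huv

open Classical in
noncomputable def mergeEquiv (huv : ¬G.Reachable u v) :
    {c : G.ConnectedComponent // c ≠ G.connectedComponentMk v} ≃
      (G ⊔ edge u v).ConnectedComponent where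
  toFun c := c.1.map (Hom.ofLE le_sup_left)
  invFun c' := c'.lift
    (fun x => if h : G.Reachable x v then
        ⟨G.connectedComponentMk u, mk_ne_mk huv⟩
      else ⟨G.connectedComponentMk x, by rwa [Ne, ConnectedComponent.eq]⟩)
    (by
      intro a b p _
      have hne : u ≠ v := fun h => huv (h ▸ Reachable.refl u)
      have hr : (G ⊔ edge u v).Reachable a b := ⟨p⟩
      rcases (reachable_sup_edge_iff hne a b).mp hr with h | ⟨h1, h2⟩ | ⟨h1, h2⟩
      · by_cases hav : G.Reachable a v
        · rw [dif_pos hav, dif_pos (h.symm.trans hav)]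
        · rw [dif_neg hav, dif_neg (fun hbv => hav (h.trans hbv))]
          exact Subtype.ext (ConnectedComponent.sound h)
      · have hbv : G.Reachable b v := h2.symm
        have hav : ¬G.Reachable a v := fun h => huv (h1.symm.trans h)
        rw [dif_neg hav, dif_pos hbv]
        exact Subtype.ext (ConnectedComponent.sound h1)
      · have hav : G.Reachable a v := h1
        have hbv : ¬G.Reachable b v := fun h => huv (h2.trans h)
        rw [dif_pos hav, dif_neg hbv]
        exact (Subtype.ext (ConnectedComponent.sound h2.symm)).symm)
  left_inv := by
    rintro ⟨c, h⟩
    induction c using SimpleGraph.ConnectedComponent.ind with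
    | _ x =>
      rw [Ne, ConnectedComponent.eq] at h
      dsimp only
      simp only [ConnectedComponent.map_mk, Hom.ofLE_apply,
        ConnectedComponent.lift_mk]
      rw [dif_neg h]
  right_inv := by
    intro c'
    induction c' using SimpleGraph.ConnectedComponent.ind with
    | _ x =>
      have hne : u ≠ v := fun h => huv (h ▸ Reachable.refl u)
      dsimp only
      rw [ConnectedComponent.lift_mk]
      by_cases h : G.Reachable x v
      · rw [dif_pos h]
        simp only [ConnectedComponent.map_mk, Hom.ofLE_apply]
        rw [ConnectedComponent.eq]
        exact (reachable_sup_edge_iff hne u x).mpr (Or.inr (Or.inl ⟨Reachable.refl u, h.symm⟩))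
      · rw [dif_neg h]
        simp only [ConnectedComponent.map_mk, Hom.ofLE_apply]

lemma card_cc_sup_edge (huv : ¬G.Reachable u v) [Finite V] :
    Nat.card (G ⊔ edge u v).ConnectedComponent + 1 = Nat.card G.ConnectedComponent := by
  classical
  letI : Fintype V := Fintype.ofFinite V
  letI : Fintype G.ConnectedComponent := Fintype.ofFinite _
  rw [← Nat.card_congr (mergeEquiv huv)]
  rw [Nat.card_eq_fintype_card, Nat.card_eq_fintype_card, Fintype.card_subtype]
  rw [Finset.filter_ne' Finset.univ (G.connectedComponentMk v),
    Finset.card_erase_of_mem (Finset.mem_univ _), Finset.card_univ]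
  have : Nonempty G.ConnectedComponent := ⟨G.connectedComponentMk u⟩
  have : 0 < Fintype.card G.ConnectedComponent := Fintype.card_pos
  omega

lemma supp_sup_edge_of_not (huv : ¬G.Reachable u v) {x : V}
    (hxu : ¬G.Reachable x u) (hxv : ¬G.Reachable x v) :
    ((G ⊔ edge u v).connectedComponentMk x).supp = (G.connectedComponentMk x).supp := by
  have hne : u ≠ v := fun h => huv (h ▸ Reachable.refl u)
  ext y
  simp only [ConnectedComponent.mem_supp_iff, ConnectedComponent.eq]
  rw [reachable_sup_edge_iff hne]
  constructor
  · rintro (h | ⟨h1, h2⟩ | ⟨h1, h2⟩)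
    · exact h
    · exact absurd h2.symm hxv
    · exact absurd h2.symm hxu
  · exact Or.inl

lemma supp_sup_edge_u (huv : ¬G.Reachable u v) :
    ((G ⊔ edge u v).connectedComponentMk u).supp =
      (G.connectedComponentMk u).supp ∪ (G.connectedComponentMk v).supp := by
  have hne : u ≠ v := fun h => huv (h ▸ Reachable.refl u)
  ext y
  simp only [Set.mem_union, ConnectedComponent.mem_supp_iff, ConnectedComponent.eq]
  rw [reachable_sup_edge_iff hne]
  constructor
  · rintro (h | ⟨h1, h2⟩ | ⟨h1, h2⟩)
    · exact Or.inl h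
    · exact Or.inl h1
    · exact Or.inr h1
  · rintro (h | h)
    · exact Or.inl h
    · exact Or.inr (Or.inr ⟨h, Reachable.refl u⟩)

end Merge
section Weights
open SimpleGraph
variable {V : Type*} [Fintype V] {G : SimpleGraph V} {u v : V}

noncomputable def moonW (G : SimpleGraph V) : ℚ :=
  ∏ᶠ c : G.ConnectedComponent, (Nat.card c.supp : ℚ)

omit [Fintype V] in
lemma moon_supp_disjoint {c d : G.ConnectedComponent} (h : c ≠ d) :
    Disjoint c.supp d.supp := by
  rw [Set.disjoint_left]
  intro y hc hd
  rw [SimpleGraph.ConnectedComponent.mem_supp_iff] at hc hd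
  exact h (hc ▸ hd)

open Classical in
lemma moon_card_supp (c : G.ConnectedComponent) :
    Nat.card c.supp = (Finset.univ.filter (fun x => G.connectedComponentMk x = c)).card := by
  classical
  rw [Nat.card_coe_set_eq, Set.ncard_eq_toFinset_card']
  congr 1
  ext x
  simp

lemma moon_supp_pos (x : V) : 0 < Nat.card (G.connectedComponentMk x).supp := by
  rw [Nat.card_coe_set_eq]
  exact (Set.ncard_pos (Set.toFinite _)).mpr ⟨x, (SimpleGraph.ConnectedComponent.mem_supp_iff _ _).mpr rfl⟩

omit [Fintype V] in
lemma moon_card_supp_map (huv : ¬G.Reachable u v) {x : V}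
    (hxu : ¬G.Reachable x u) (hxv : ¬G.Reachable x v) :
    Nat.card ((G ⊔ edge u v).connectedComponentMk x).supp
      = Nat.card (G.connectedComponentMk x).supp := by
  rw [supp_sup_edge_of_not huv hxu hxv]

lemma moon_card_supp_map_u (huv : ¬G.Reachable u v) :
    Nat.card ((G ⊔ edge u v).connectedComponentMk u).supp
      = Nat.card (G.connectedComponentMk u).supp + Nat.card (G.connectedComponentMk v).supp := by
  rw [supp_sup_edge_u huv, Nat.card_coe_set_eq, Nat.card_coe_set_eq,
    Nat.card_coe_set_eq, Set.ncard_union_eq (moon_supp_disjoint (mk_ne_mk huv))]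

lemma moonW_sup_edge (huv : ¬G.Reachable u v) :
    moonW (G ⊔ edge u v) *
        ((Nat.card (G.connectedComponentMk u).supp : ℚ) *
          (Nat.card (G.connectedComponentMk v).supp : ℚ))
      = ((Nat.card (G.connectedComponentMk u).supp : ℚ) +
          (Nat.card (G.connectedComponentMk v).supp : ℚ)) * moonW G := by
  classical
  letI : Fintype G.ConnectedComponent := Fintype.ofFinite _
  letI : Fintype (G ⊔ edge u v).ConnectedComponent := Fintype.ofFinite _
  have hne := mk_ne_mk huv
  set f : G.ConnectedComponent → ℚ :=
    fun c => (Nat.card ((ConnectedComponent.map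
      (Hom.ofLE (le_sup_left : G ≤ G ⊔ edge u v)) c).supp) : ℚ) with hf
  rw [moonW, moonW, finprod_eq_prod_of_fintype, finprod_eq_prod_of_fintype]
  rw [← Equiv.prod_comp (mergeEquiv huv) (fun c' => (Nat.card c'.supp : ℚ))]
  have happ : ∀ c : {c : G.ConnectedComponent // c ≠ G.connectedComponentMk v},
      (Nat.card ((mergeEquiv huv) c).supp : ℚ) = f c.1 := fun _ => rfl
  rw [Finset.prod_congr rfl (fun c _ => happ c)]
  rw [← Finset.prod_subtype (Finset.univ.erase (G.connectedComponentMk v))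
    (p := fun c => c ≠ G.connectedComponentMk v) (by simp) f]
  have hmemu : G.connectedComponentMk u ∈ Finset.univ.erase (G.connectedComponentMk v) :=
    Finset.mem_erase.mpr ⟨hne, Finset.mem_univ _⟩
  rw [← Finset.mul_prod_erase _ _ hmemu]
  rw [← Finset.mul_prod_erase _ (fun c => (Nat.card c.supp : ℚ))
    (Finset.mem_univ (G.connectedComponentMk v)),
    ← Finset.mul_prod_erase _ (fun c => (Nat.card c.supp : ℚ)) hmemu]
  have h1 : f (G.connectedComponentMk u)
      = (Nat.card (G.connectedComponentMk u).supp : ℚ) +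
          (Nat.card (G.connectedComponentMk v).supp : ℚ) := by
    rw [hf]
    dsimp only
    rw [SimpleGraph.ConnectedComponent.map_mk]
    rw [show (Hom.ofLE (le_sup_left : G ≤ G ⊔ edge u v)) u = u from rfl]
    rw [moon_card_supp_map_u huv]
    push_cast
    ring
  have h2 : ∀ c ∈ (Finset.univ.erase (G.connectedComponentMk v)).erase (G.connectedComponentMk u),
      f c = (Nat.card c.supp : ℚ) := by
    intro c hc
    induction c using SimpleGraph.ConnectedComponent.ind with | _ x => ?_
    rw [Finset.mem_erase, Finset.mem_erase] at hc
    have hxu : ¬G.Reachable x u := fun h => hc.1 (ConnectedComponent.sound h)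
    have hxv : ¬G.Reachable x v := fun h => hc.2.1 (ConnectedComponent.sound h)
    rw [hf]
    dsimp only
    rw [SimpleGraph.ConnectedComponent.map_mk]
    rw [show (Hom.ofLE (le_sup_left : G ≤ G ⊔ edge u v)) x = x from rfl]
    rw [moon_card_supp_map huv hxu hxv]
  rw [Finset.prod_congr rfl h2, h1]
  ring

lemma moon_sum_inv_supp (G : SimpleGraph V) :
    ∑ x : V, ((Nat.card (G.connectedComponentMk x).supp : ℚ))⁻¹
      = (Nat.card G.ConnectedComponent : ℚ) := by
  classical
  letI : Fintype G.ConnectedComponent := Fintype.ofFinite _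
  rw [← Finset.sum_fiberwise Finset.univ (fun x => G.connectedComponentMk x)
    (fun x => ((Nat.card (G.connectedComponentMk x).supp : ℚ))⁻¹)]
  rw [Nat.card_eq_fintype_card, ← Finset.card_univ, Finset.card_eq_sum_ones, Nat.cast_sum]
  refine Finset.sum_congr rfl fun c _ => ?_
  have hcard : (Finset.univ.filter (fun x => G.connectedComponentMk x = c)).card
      = Nat.card c.supp := (moon_card_supp c).symm
  have hterm : ∀ x ∈ Finset.univ.filter (fun x => G.connectedComponentMk x = c),
      ((Nat.card (G.connectedComponentMk x).supp : ℚ))⁻¹ = ((Nat.card c.supp : ℚ))⁻¹ := by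
    intro x hx
    rw [Finset.mem_filter] at hx
    rw [hx.2]
  rw [Finset.sum_congr rfl hterm, Finset.sum_const, hcard, nsmul_eq_mul]
  obtain ⟨x, rfl⟩ := c.exists_rep
  have := moon_supp_pos (G := G) x
  rw [mul_inv_cancel₀]
  · simp
  · exact_mod_cast this.ne'

open Classical in
lemma moon_card_not_reachable (G : SimpleGraph V) (x : V) :
    (Finset.univ.filter fun y => ¬G.Reachable y x).card
      = Fintype.card V - Nat.card (G.connectedComponentMk x).supp := by
  classical
  rw [Finset.filter_not, Finset.card_sdiff_of_subset (Finset.filter_subset _ _), Finset.card_univ]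
  congr 1
  rw [moon_card_supp]
  congr 1
  ext y
  simp [SimpleGraph.ConnectedComponent.eq]

end Weights
section EdgeCount
open SimpleGraph
variable {V : Type*}

lemma moon_acyclic_anti {H G : SimpleGraph V} (hHG : H ≤ G) (hG : G.IsAcyclic) : H.IsAcyclic :=
  fun _ c hc => hG (c.mapLe hHG) ((Walk.mapLe_isCycle hHG).mpr hc)

noncomputable def moonBotEquiv : (⊥ : SimpleGraph V).ConnectedComponent ≃ V where
  toFun c := c.lift id (fun _ _ p _ => reachable_bot.mp ⟨p⟩)
  invFun := (⊥ : SimpleGraph V).connectedComponentMk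
  left_inv := by
    intro c
    induction c using SimpleGraph.ConnectedComponent.ind with | _ x => rfl
  right_inv := fun v => rfl

lemma moon_edge_card_acyclic [Fintype V] (m : ℕ) :
    ∀ (G : SimpleGraph V), G.IsAcyclic → G.edgeSet.ncard = m →
      m + Nat.card G.ConnectedComponent = Fintype.card V := by
  classical
  induction m using Nat.strong_induction_on with
  | _ m ih =>
    intro G hG hm
    rcases Nat.eq_zero_or_pos m with rfl | hpos
    · have hbot : G = ⊥ := by
        rw [← edgeSet_eq_empty]
        exact (Set.ncard_eq_zero (Set.toFinite _)).mp hm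
      subst hbot
      rw [Nat.card_congr moonBotEquiv, Nat.card_eq_fintype_card]
      omega
    · obtain ⟨e, he⟩ : G.edgeSet.Nonempty := by
        rw [Set.nonempty_iff_ne_empty]
        intro h
        rw [h, Set.ncard_empty] at hm
        omega
      induction e using Sym2.ind with | _ u v => ?_
      have heS : s(u, v) ∈ G.edgeSet := he
      rw [mem_edgeSet] at he
      set D := G \ fromEdgeSet {s(u, v)} with hD
      have hDle : D ≤ G := sdiff_le
      have hDac : D.IsAcyclic := moon_acyclic_anti hDle hG
      have hbr : ¬D.Reachable u v := ((isAcyclic_iff_forall_adj_isBridge.mp hG) he)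
      have hsup : D ⊔ edge u v = G := by
        ext a b
        rw [sup_adj, sdiff_adj, fromEdgeSet_adj, edge_adj]
        constructor
        · rintro (⟨h1, -⟩ | ⟨(⟨rfl, rfl⟩ | ⟨rfl, rfl⟩), -⟩)
          · exact h1
          · exact he
          · exact he.symm
        · intro hab
          by_cases hid : s(a, b) = s(u, v)
          · right
            refine ⟨?_, hab.ne⟩
            rw [Sym2.eq_iff] at hid
            tauto
          · left
            exact ⟨hab, fun h => hid h.1⟩
      have hDedge : D.edgeSet = G.edgeSet \ {s(u, v)} := by
        ext f
        rw [hD, edgeSet_sdiff, edgeSet_fromEdgeSet]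
        simp only [Set.mem_diff, Set.mem_singleton_iff, Set.mem_setOf_eq]
        constructor
        · rintro ⟨hf, h2⟩
          exact ⟨hf, fun h => h2 ⟨h, G.not_isDiag_of_mem_edgeSet (h ▸ hf)⟩⟩
        · rintro ⟨hf, hne⟩
          exact ⟨hf, fun h => hne h.1⟩
      have hDcard : D.edgeSet.ncard = m - 1 := by
        rw [hDedge, Set.ncard_diff_singleton_of_mem heS, hm]
      have hcc : Nat.card D.ConnectedComponent = Nat.card G.ConnectedComponent + 1 := by
        have h2 := card_cc_sup_edge hbr
        rw [hsup] at h2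
        omega
      have := ih (m - 1) (by omega) D hDac hDcard
      omega

end EdgeCount

section DoubleCount
open SimpleGraph
variable {V : Type*}

noncomputable def moonT (G : SimpleGraph V) : ℕ := {T : SimpleGraph V | G ≤ T ∧ T.IsTree}.ncard

lemma moon_edge_le_iff {G : SimpleGraph V} {u v : V} (hne : u ≠ v) :
    edge u v ≤ G ↔ G.Adj u v := by
  constructor
  · intro h
    exact h ((edge_adj u v u v).mpr ⟨Or.inl ⟨rfl, rfl⟩, hne⟩)
  · intro h a b hab
    rw [edge_adj] at hab
    rcases hab.1 with ⟨rfl, rfl⟩ | ⟨rfl, rfl⟩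
    · exact h
    · exact h.symm

open Classical in
lemma moon_card_adj_pairs [Fintype V] (G : SimpleGraph V) :
    (Finset.univ.filter fun p : V × V => G.Adj p.1 p.2).card = 2 * G.edgeSet.ncard := by
  classical
  have e : G.Dart ≃ {p : V × V // G.Adj p.1 p.2} :=
    { toFun := fun d => ⟨d.toProd, d.adj⟩
      invFun := fun p => ⟨p.1, p.2⟩
      left_inv := fun d => rfl
      right_inv := fun p => rfl }
  rw [← Fintype.card_subtype, ← Fintype.card_congr e, dart_card_eq_twice_card_edges]
  congr 1
  rw [Set.ncard_eq_toFinset_card']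
  exact congrArg Finset.card (by ext e; simp)

open Classical in
lemma moon_tcount_eq (G : SimpleGraph V) [Fintype V] :
    moonT G = (Finset.univ.filter fun T : SimpleGraph V => G ≤ T ∧ T.IsTree).card := by
  classical
  rw [moonT, Set.ncard_eq_toFinset_card', Set.toFinset_setOf]

open Classical in
lemma moon_double_count [Fintype V] (G : SimpleGraph V) (hG : G.IsAcyclic) (k : ℕ)
    (hk : Nat.card G.ConnectedComponent = k) :
    ∑ p ∈ Finset.univ.filter (fun p : V × V => ¬G.Reachable p.1 p.2),
        moonT (G ⊔ edge p.1 p.2)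
      = 2 * (k - 1) * moonT G := by
  classical
  have hterm : ∀ p ∈ Finset.univ.filter (fun p : V × V => ¬G.Reachable p.1 p.2),
      moonT (G ⊔ edge p.1 p.2)
        = ((Finset.univ.filter fun T : SimpleGraph V => G ≤ T ∧ T.IsTree).filter
            (fun T => T.Adj p.1 p.2)).card := by
    intro p hp
    rw [Finset.mem_filter] at hp
    have hne : p.1 ≠ p.2 := fun h => hp.2 (h ▸ Reachable.refl p.1)
    rw [moon_tcount_eq, Finset.filter_filter]
    congr 1
    apply Finset.filter_congr
    intro T _
    rw [sup_le_iff, moon_edge_le_iff hne]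
    tauto
  rw [Finset.sum_congr rfl hterm]
  simp only [Finset.card_filter]
  rw [Finset.sum_comm]
  have hinner : ∀ T ∈ Finset.univ.filter fun T : SimpleGraph V => G ≤ T ∧ T.IsTree,
      ∑ p ∈ Finset.univ.filter (fun p : V × V => ¬G.Reachable p.1 p.2),
          (if T.Adj p.1 p.2 then 1 else 0) = 2 * (k - 1) := by
    intro T hT
    rw [Finset.mem_filter] at hT
    obtain ⟨-, hle, hTree⟩ := hT
    rw [← Finset.card_filter, Finset.filter_filter]
    have hset : Finset.univ.filter (fun p : V × V => ¬G.Reachable p.1 p.2 ∧ T.Adj p.1 p.2)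
        = Finset.univ.filter (fun p : V × V => T.Adj p.1 p.2)
          \ Finset.univ.filter (fun p : V × V => G.Adj p.1 p.2) := by
      ext p
      simp only [Finset.mem_filter, Finset.mem_sdiff, Finset.mem_univ, true_and]
      constructor
      · rintro ⟨h1, h2⟩
        exact ⟨h2, fun h => h1 h.reachable⟩
      · rintro ⟨h1, h2⟩
        refine ⟨fun hr => h2 (adj_of_le_of_reachable hTree.IsAcyclic hle h1 hr), h1⟩
    rw [hset, Finset.card_sdiff_of_subset]
    · rw [moon_card_adj_pairs, moon_card_adj_pairs]
      have hT1 : T.edgeSet.ncard + 1 = Fintype.card V := by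
        have hcard := hTree.card_edgeFinset
        rw [Set.ncard_eq_toFinset_card']
        rw [show (T.edgeSet.toFinset) = T.edgeFinset from rfl]
        exact hcard
      have hG1 := moon_edge_card_acyclic G.edgeSet.ncard G hG rfl
      rw [hk] at hG1
      have hk1 : 1 ≤ k := by
        have : Nonempty G.ConnectedComponent := by
          have : Nonempty V := Fintype.card_pos_iff.mp (by omega)
          exact ⟨G.connectedComponentMk this.some⟩
        have := Nat.card_pos (α := G.ConnectedComponent)
        omega
      omega
    · intro p hp
      rw [Finset.mem_filter] at hp ⊢
      exact ⟨hp.1, hle hp.2⟩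
  rw [Finset.sum_congr rfl hinner, Finset.sum_const, moon_tcount_eq, smul_eq_mul]
  ring

end DoubleCount
section Main
open SimpleGraph
variable {V : Type*}

lemma moon_main [Fintype V] (hn : 0 < Fintype.card V) :
    ∀ (k : ℕ) (G : SimpleGraph V), G.IsAcyclic → Nat.card G.ConnectedComponent = k →
      (moonT G : ℚ) = (Fintype.card V : ℚ) ^ ((k : ℤ) - 2) * moonW G := by
  classical
  intro k
  induction k using Nat.strong_induction_on with
  | _ k ih =>
    intro G hG hk
    have hV : Nonempty V := Fintype.card_pos_iff.mp hn
    have hn0 : (Fintype.card V : ℚ) ≠ 0 := Nat.cast_ne_zero.mpr hn.ne'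
    have hCC : Nonempty G.ConnectedComponent := ⟨G.connectedComponentMk hV.some⟩
    have hkpos : 0 < k := by rw [← hk]; exact Nat.card_pos
    rcases eq_or_lt_of_le (Nat.one_le_iff_ne_zero.mpr hkpos.ne') with h1 | h2
    · -- base case : k = 1, G is a tree
      have hsub : Subsingleton G.ConnectedComponent :=
        (Nat.card_eq_one_iff_unique.mp (hk.trans h1.symm)).1
      have hpre : G.Preconnected := fun a b =>
        (SimpleGraph.ConnectedComponent.eq).mp (Subsingleton.elim _ _)
      have hconn : G.Connected := ⟨hpre⟩
      have hTree : G.IsTree := ⟨hconn, hG⟩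
      have hset : {T : SimpleGraph V | G ≤ T ∧ T.IsTree} = {G} := by
        ext T
        simp only [Set.mem_setOf_eq, Set.mem_singleton_iff]
        constructor
        · rintro ⟨hle, hT⟩
          ext a b
          exact ⟨fun h => adj_of_le_of_reachable hT.IsAcyclic hle h (hpre a b),
            fun h => hle h⟩
        · rintro rfl
          exact ⟨le_rfl, hTree⟩
      have hW : moonW G = (Fintype.card V : ℚ) := by
        letI : Fintype G.ConnectedComponent := Fintype.ofFinite _
        rw [moonW, finprod_eq_prod_of_fintype]
        rw [Fintype.prod_subsingleton _ (G.connectedComponentMk hV.some)]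
        have hsupp : (G.connectedComponentMk hV.some).supp = Set.univ := by
          ext y
          simp only [SimpleGraph.ConnectedComponent.mem_supp_iff, Set.mem_univ, iff_true]
          exact Subsingleton.elim _ _
        rw [hsupp]
        norm_cast
        rw [Nat.card_coe_set_eq, Set.ncard_univ, Nat.card_eq_fintype_card]
      rw [moonT, hset, Set.ncard_singleton, hW, ← h1]
      rw [show ((1 : ℕ) : ℤ) - 2 = -1 by norm_num, zpow_neg_one, Nat.cast_one,
        inv_mul_cancel₀ hn0]
    · -- inductive step : k ≥ 2
      set n := Fintype.card V with hnn
      set P : Finset (V × V) := Finset.univ.filter (fun p : V × V => ¬G.Reachable p.1 p.2)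
        with hP
      set j : V → ℚ := fun x => (Nat.card (G.connectedComponentMk x).supp : ℚ) with hj
      have hjpos : ∀ x, 0 < j x := fun x => by
        simp only [hj]
        exact_mod_cast moon_supp_pos (G := G) x
      have hjne : ∀ x, j x ≠ 0 := fun x => (hjpos x).ne'
      have hjle : ∀ x, j x ≤ (n : ℚ) := by
        intro x
        simp only [hj]
        have : Nat.card (G.connectedComponentMk x).supp ≤ n := by
          rw [Nat.card_coe_set_eq, hnn, ← Nat.card_eq_fintype_card, ← Set.ncard_univ]
          exact Set.ncard_le_ncard (Set.subset_univ _) (Set.toFinite _)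
        exact_mod_cast this
      -- the double counting identity, cast to ℚ
      have hdc := moon_double_count G hG k hk
      have hdcQ : ∑ p ∈ P, (moonT (G ⊔ edge p.1 p.2) : ℚ)
          = 2 * ((k : ℚ) - 1) * (moonT G : ℚ) := by
        rw [← Nat.cast_sum]
        rw [hdc]
        push_cast [Nat.cast_sub hkpos]
        ring
      -- each term via the induction hypothesis
      have hterm : ∀ p ∈ P, (moonT (G ⊔ edge p.1 p.2) : ℚ)
          = (n : ℚ) ^ ((k : ℤ) - 3) * moonW G * ((j p.1)⁻¹ + (j p.2)⁻¹) := by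
        intro p hp
        rw [hP, Finset.mem_filter] at hp
        have hpr : ¬G.Reachable p.1 p.2 := hp.2
        have hac := acyclic_sup_edge hG hpr
        have hcc : Nat.card (G ⊔ edge p.1 p.2).ConnectedComponent = k - 1 := by
          have := card_cc_sup_edge hpr
          omega
        have hIH := ih (k - 1) (by omega) _ hac hcc
        have hexp : ((k - 1 : ℕ) : ℤ) - 2 = (k : ℤ) - 3 := by
          rw [Nat.cast_sub hkpos]
          ring
        have hWs := moonW_sup_edge hpr
        have hWval : moonW (G ⊔ edge p.1 p.2)
            = moonW G * (j p.1 + j p.2) * ((j p.1) * (j p.2))⁻¹ := by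
          rw [show moonW G * (j p.1 + j p.2) = (j p.1 + j p.2) * moonW G by ring, ← hWs,
            mul_inv_cancel_right₀ (mul_ne_zero (hjne p.1) (hjne p.2))]
        rw [hIH, hexp, hWval, mul_assoc (moonW G), ← div_eq_mul_inv,
          ← inv_add_inv (hjne p.1) (hjne p.2), ← mul_assoc]
      rw [Finset.sum_congr rfl hterm, ← Finset.mul_sum] at hdcQ
      -- compute the sum of inverses
      have hcard1 : ∀ a : V, ((Finset.univ.filter fun b => ¬G.Reachable a b).card : ℚ)
          = (n : ℚ) - j a := by
        intro a
        have hpred : (Finset.univ.filter fun b => ¬G.Reachable a b)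
            = (Finset.univ.filter fun b => ¬G.Reachable b a) := by
          apply Finset.filter_congr
          intro b _
          rw [SimpleGraph.reachable_comm]
        rw [hpred, moon_card_not_reachable]
        have hle : Nat.card (G.connectedComponentMk a).supp ≤ n := by
          have := hjle a
          simp only [hj] at this
          exact_mod_cast this
        push_cast [Nat.cast_sub hle]
        exact Nat.cast_sub hle
      have hcard2 : ∀ b : V, ((Finset.univ.filter fun a => ¬G.Reachable a b).card : ℚ)
          = (n : ℚ) - j b := by
        intro b
        rw [moon_card_not_reachable]
        have hle : Nat.card (G.connectedComponentMk b).supp ≤ n := by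
          have := hjle b
          simp only [hj] at this
          exact_mod_cast this
        push_cast [Nat.cast_sub hle]
        exact Nat.cast_sub hle
      have hsum1 : ∑ x : V, ((n : ℚ) - j x) * (j x)⁻¹ = (n : ℚ) * (k : ℚ) - n := by
        have : ∀ x : V, ((n : ℚ) - j x) * (j x)⁻¹ = (n : ℚ) * (j x)⁻¹ - 1 := by
          intro x
          rw [sub_mul, mul_inv_cancel₀ (hjne x)]
        rw [Finset.sum_congr rfl fun x _ => this x, Finset.sum_sub_distrib,
          ← Finset.mul_sum]
        have := moon_sum_inv_supp (V := V) G
        rw [hj]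
        rw [this, hk]
        simp [hnn, Finset.card_univ]
      have hS : ∑ p ∈ P, ((j p.1)⁻¹ + (j p.2)⁻¹) = 2 * ((n : ℚ) * k - n) := by
        rw [Finset.sum_add_distrib]
        have hS1 : ∑ p ∈ P, (j p.1)⁻¹ = (n : ℚ) * k - n := by
          rw [hP, Finset.sum_filter, Fintype.sum_prod_type]
          have hin : ∀ a : V, (∑ b : V, if ¬G.Reachable a b then (j a)⁻¹ else 0)
              = ((n : ℚ) - j a) * (j a)⁻¹ := by
            intro a
            rw [← Finset.sum_filter, Finset.sum_const, nsmul_eq_mul, hcard1]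
          rw [Finset.sum_congr rfl fun a _ => hin a, hsum1]
        have hS2 : ∑ p ∈ P, (j p.2)⁻¹ = (n : ℚ) * k - n := by
          rw [hP, Finset.sum_filter, Fintype.sum_prod_type]
          rw [Finset.sum_comm]
          have hin : ∀ b : V, (∑ a : V, if ¬G.Reachable a b then (j b)⁻¹ else 0)
              = ((n : ℚ) - j b) * (j b)⁻¹ := by
            intro b
            rw [← Finset.sum_filter, Finset.sum_const, nsmul_eq_mul, hcard2]
          rw [Finset.sum_congr rfl fun b _ => hin b, hsum1]
        rw [hS1, hS2]
        ring
      rw [hS] at hdcQ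
      -- final algebra
      have hk1 : ((k : ℚ) - 1) ≠ 0 := by
        have : (2 : ℚ) ≤ (k : ℚ) := by exact_mod_cast h2
        intro h
        nlinarith
      have hnk : (n : ℚ) * k - n = n * (k - 1) := by ring
      rw [hnk] at hdcQ
      have hzp : (n : ℚ) ^ ((k : ℤ) - 3) * (n : ℚ) = (n : ℚ) ^ ((k : ℤ) - 2) := by
        rw [show (k : ℤ) - 2 = ((k : ℤ) - 3) + 1 by ring, zpow_add₀ hn0, zpow_one]
      calc (moonT G : ℚ)
          = (2 * ((k : ℚ) - 1))⁻¹ * (2 * ((k : ℚ) - 1) * (moonT G : ℚ)) := by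
            rw [inv_mul_cancel_left₀ (by positivity)]
        _ = (2 * ((k : ℚ) - 1))⁻¹ *
              ((n : ℚ) ^ ((k : ℤ) - 3) * moonW G * (2 * ((n : ℚ) * (k - 1)))) := by
            rw [← hdcQ]
        _ = (n : ℚ) ^ ((k : ℤ) - 2) * moonW G := by
            rw [← hzp]
            field_simp

end Main

/-- Moon's formula: the number of spanning trees of `K_n` containing a given spanning
forest `F` with `k` connected components of sizes `j_1, …, j_k` is `n^(k-2) ∏ i j_i`. -/
theorem stmt_5 (n : ℕ) (hn : 0 < n) (F : SimpleGraph (Fin n)) (hF : F.IsAcyclic)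
    (k : ℕ) (hk : k = Nat.card F.ConnectedComponent) :
    ({T : SimpleGraph (Fin n) | F ≤ T ∧ T.IsTree}.ncard : ℚ)
      = (n : ℚ) ^ ((k : ℤ) - 2) * ∏ᶠ c : F.ConnectedComponent, (Nat.card c.supp : ℚ) := by
  have hcard : Fintype.card (Fin n) = n := Fintype.card_fin n
  have h := moon_main (V := Fin n) (by rw [hcard]; exact hn) k F hF hk.symm
  rw [hcard] at h
  exact h
end

section
/- Let n = 2l+1 be odd, ζ = ζ_n a primitive n-th root of unity, and for 1 ≤ k ≤ n−1 define the l×l matrix C̄_k with (i,j) entry equal to −(1+ζ^{ik})(1+ζ^{−jk}) for i ≠ j and −(1+ζ^{ik})(1+ζ^{−ik}) − 2 for i = j (1 ≤ i,j ≤ l). Then C̄_k + 2I_l has rank one, and the eigenvalues of C̄_k are −2 with multiplicity l−1 and −n with multiplicity 1. -/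
open Matrix Polynomial

private lemma rank_vmv {l : ℕ} (w v : Fin l → ℂ) (hw : w ≠ 0) (j0 : Fin l) (hv : v j0 ≠ 0) :
    (Matrix.vecMulVec w v).rank = 1 := by
  have hmv : ∀ x, (Matrix.vecMulVec w v).mulVec x = (v ⬝ᵥ x) • w := by
    intro x; funext i
    simp [Matrix.mulVec, dotProduct, Matrix.vecMulVec_apply, Finset.mul_sum,
      mul_assoc, mul_comm, mul_left_comm]
  have hrange : LinearMap.range (Matrix.vecMulVec w v).mulVecLin = Submodule.span ℂ {w} := by
    apply le_antisymm
    · rintro y ⟨x, rfl⟩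
      rw [Matrix.mulVecLin_apply, hmv]
      exact Submodule.smul_mem _ _ (Submodule.mem_span_singleton_self w)
    · rw [Submodule.span_singleton_le_iff_mem]
      refine ⟨Pi.single j0 (v j0)⁻¹, ?_⟩
      rw [Matrix.mulVecLin_apply, hmv]
      have : v ⬝ᵥ Pi.single j0 (v j0)⁻¹ = 1 := by
        simp [dotProduct, Pi.single_apply, hv]
      rw [this, one_smul]
  rw [Matrix.rank, hrange]
  exact finrank_span_singleton hw

private lemma det_smul_one_add_vmv {K : Type*} [Field K] {l : ℕ} (hl : 0 < l) (a : K)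
    (ha : a ≠ 0) (u v : Fin l → K) :
    (a • (1 : Matrix (Fin l) (Fin l) K) + Matrix.vecMulVec u v).det
      = a ^ (l - 1) * (a + v ⬝ᵥ u) := by
  have key : a • (1 : Matrix (Fin l) (Fin l) K) + Matrix.vecMulVec u v
      = a • ((1 : Matrix (Fin l) (Fin l) K) + Matrix.replicateCol Unit (a⁻¹ • u) * Matrix.replicateRow Unit v) := by
    rw [Matrix.vecMulVec_eq Unit u v, smul_add]
    congr 1
    ext i j
    simp [Matrix.mul_apply, Matrix.replicateCol_apply, Matrix.replicateRow_apply, mul_assoc,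
      mul_inv_cancel₀ ha, ← mul_assoc, Finset.mul_sum]
  rw [key, Matrix.det_smul, Matrix.det_one_add_replicateCol_mul_replicateRow]
  have hdv : v ⬝ᵥ (a⁻¹ • u) = a⁻¹ * (v ⬝ᵥ u) := by
    simp [dotProduct, Finset.mul_sum, mul_left_comm]
  rw [hdv, Fintype.card_fin]
  have : a ^ l = a ^ (l - 1) * a := by
    rw [← pow_succ]; congr 1; omega
  rw [this]
  field_simp

private lemma sum_range_split' (f : ℕ → ℂ) (m n : ℕ) :
    ∑ i ∈ Finset.range (m+n), f i
      = (∑ i ∈ Finset.range m, f i) + ∑ i ∈ Finset.range n, f (m+i) := by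
  rw [Finset.range_eq_Ico, ← Finset.sum_Ico_consecutive f (Nat.zero_le m) (Nat.le_add_right m n)]
  congr 1
  all_goals (rw [Finset.sum_Ico_eq_sum_range]; simp)

set_option maxHeartbeats 1000000 in
set_option synthInstance.maxHeartbeats 400000 in
/-- For odd `n = 2l+1`, a primitive `n`-th root of unity `ζ` and `1 ≤ k ≤ n-1`, the
matrix `C̄_k` with entries `-ξ_i ξ'_j` off the diagonal and `-ξ_i ξ'_i - 2` on the
diagonal (`ξ_i = 1 + ζ^{ik}`, `ξ'_j = 1 + ζ^{-jk}`) satisfies: `C̄_k + 2 I` has rank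
one, and its eigenvalues are `-2` with multiplicity `l-1` and `-n` with multiplicity
`1` (encoded via the characteristic polynomial). -/
theorem stmt_13 (l : ℕ) (hl : 0 < l) (k : ℕ) (hk1 : 1 ≤ k) (hk2 : k ≤ 2 * l)
    (ζ : ℂ) (hζ : IsPrimitiveRoot ζ (2 * l + 1)) :
    let ξ : Fin l → ℂ := fun i => 1 + ζ ^ (((i : ℕ) + 1) * k)
    let ξ' : Fin l → ℂ := fun j => 1 + (ζ ^ (((j : ℕ) + 1) * k))⁻¹
    let Cbar : Matrix (Fin l) (Fin l) ℂ :=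
      Matrix.of fun i j => if i = j then -(ξ i * ξ' i) - 2 else -(ξ i * ξ' j)
    (Cbar + (2 : ℂ) • (1 : Matrix (Fin l) (Fin l) ℂ)).rank = 1 ∧
    Cbar.charpoly = (Polynomial.X + Polynomial.C 2) ^ (l - 1) *
        (Polynomial.X + Polynomial.C ((2 * l + 1 : ℕ) : ℂ)) := by
  intro ξ ξ' Cbar
  set z : ℂ := ζ ^ k with hz
  have hzn : z ^ (2 * l + 1) = 1 := by
    rw [hz, ← pow_mul, mul_comm, pow_mul, hζ.pow_eq_one, one_pow]
  have hzne1 : z ≠ 1 := by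
    intro h
    have := (hζ.pow_eq_one_iff_dvd k).mp h
    have := Nat.le_of_dvd (by omega) this
    omega
  have hzne1' : z ≠ 1 := hzne1
  -- powers of z are never -1
  have hpow_ne : ∀ m : ℕ, z ^ m ≠ -1 := by
    intro m hm
    have h1 : (z ^ m) ^ (2 * l + 1) = 1 := by
      rw [← pow_mul, mul_comm, pow_mul, hzn, one_pow]
    rw [hm] at h1
    have : ((-1 : ℂ)) ^ (2 * l + 1) = -1 := Odd.neg_one_pow ⟨l, by ring⟩
    rw [this] at h1
    norm_num at h1
  have hζpow : ∀ i : Fin l, ζ ^ (((i : ℕ) + 1) * k) = z ^ ((i : ℕ) + 1) := by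
    intro i; rw [hz, ← pow_mul, mul_comm]
  have hξne : ∀ i, ξ i ≠ 0 := by
    intro i h
    have : ζ ^ (((i : ℕ) + 1) * k) = -1 := by linear_combination h
    rw [hζpow i] at this
    exact hpow_ne _ this
  have hξ'ne : ∀ j, ξ' j ≠ 0 := by
    intro j h
    have h2 : (ζ ^ (((j : ℕ) + 1) * k))⁻¹ = -1 := by linear_combination h
    rw [hζpow j] at h2
    have : z ^ ((j : ℕ) + 1) = -1 := by
      rw [inv_eq_iff_eq_inv] at h2
      rw [h2]; norm_num
    exact hpow_ne _ this
  -- inverse powers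
  have hinv : ∀ i : Fin l, (z ^ ((i : ℕ) + 1))⁻¹ = z ^ (2 * l - (i : ℕ)) := by
    intro i
    apply inv_eq_of_mul_eq_one_right
    rw [← pow_add]
    have : (i : ℕ) + 1 + (2 * l - (i : ℕ)) = 2 * l + 1 := by omega
    rw [this, hzn]
  -- the key sum
  have hsum : ∑ i : Fin l, ξ' i * ξ i = 2 * (l : ℂ) - 1 := by
    have hterm : ∀ i : Fin l, ξ' i * ξ i = 2 + z ^ ((i : ℕ) + 1) + z ^ (2 * l - (i : ℕ)) := by
      intro i
      show (1 + (ζ ^ (((i : ℕ) + 1) * k))⁻¹) * (1 + ζ ^ (((i : ℕ) + 1) * k))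
          = 2 + z ^ ((i : ℕ) + 1) + z ^ (2 * l - (i : ℕ))
      rw [hζpow i, hinv i]
      have hcancel : z ^ (2 * l - (i : ℕ)) * z ^ ((i : ℕ) + 1) = 1 := by
        rw [← pow_add]
        have : 2 * l - (i : ℕ) + ((i : ℕ) + 1) = 2 * l + 1 := by omega
        rw [this, hzn]
      generalize z ^ ((i : ℕ) + 1) = A at hcancel ⊢
      generalize z ^ (2 * l - (i : ℕ)) = B at hcancel ⊢
      linear_combination hcancel
    rw [Finset.sum_congr rfl (fun i _ => hterm i)]
    rw [Finset.sum_add_distrib, Finset.sum_add_distrib, Finset.sum_const]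
    have hgeom : ∑ j ∈ Finset.range (2 * l + 1), z ^ j = 0 := by
      rw [geom_sum_eq hzne1, hzn]; simp
    have h1 : ∑ i : Fin l, z ^ ((i : ℕ) + 1) = ∑ i ∈ Finset.range l, z ^ (i + 1) := by
      rw [Fin.sum_univ_eq_sum_range (fun i => z ^ (i + 1)) l]
    have h2 : ∑ i : Fin l, z ^ (2 * l - (i : ℕ))
        = ∑ i ∈ Finset.range l, z ^ (l + 1 + i) := by
      rw [Fin.sum_univ_eq_sum_range (fun i => z ^ (2 * l - i)) l,
        ← Finset.sum_range_reflect (fun i => z ^ (l + 1 + i)) l]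
      apply Finset.sum_congr rfl
      intro i hi
      have hi' := Finset.mem_range.mp hi
      congr 1
      omega
    rw [h1, h2]
    have hsplit : (∑ i ∈ Finset.range l, z ^ (i + 1))
        + ∑ i ∈ Finset.range l, z ^ (l + 1 + i)
        = ∑ j ∈ Finset.range (2 * l), z ^ (j + 1) := by
      rw [two_mul, sum_range_split' (fun j => z ^ (j + 1)) l l]
      apply congrArg
      apply Finset.sum_congr rfl
      intro i _
      congr 1
      omega
    have hsum0 : ∑ j ∈ Finset.range (2 * l), z ^ (j + 1) = -1 := by
      have := hgeom
      rw [Finset.sum_range_succ'] at this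
      simpa using by linear_combination this
    rw [add_assoc, hsplit, hsum0]
    simp [Finset.card_univ]
    ring
  -- Cbar + 2I = vecMulVec (-ξ) ξ'
  have hCbar2 : Cbar + (2 : ℂ) • (1 : Matrix (Fin l) (Fin l) ℂ)
      = Matrix.vecMulVec (-ξ) ξ' := by
    ext i j
    by_cases h : i = j
    · subst h
      simp [Cbar, Matrix.vecMulVec_apply, Matrix.one_apply]
    · simp [Cbar, Matrix.vecMulVec_apply, Matrix.one_apply, h]
  constructor
  · rw [hCbar2]
    refine rank_vmv _ _ ?_ ⟨0, hl⟩ (hξ'ne ⟨0, hl⟩)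
    intro h
    have := congrFun h ⟨0, hl⟩
    simp at this
    exact hξne ⟨0, hl⟩ this
  · -- charpoly
    set f : ℂ[X] →+* RatFunc ℂ := (algebraMap ℂ[X] (RatFunc ℂ) : ℂ[X] →+* RatFunc ℂ) with hf
    have hfinj : Function.Injective f := RatFunc.algebraMap_injective ℂ
    apply hfinj
    rw [Matrix.charpoly, RingHom.map_det]
    set a : RatFunc ℂ := f (X + C 2) with ha_def
    have ha : a ≠ 0 := by
      rw [ha_def]
      exact (map_ne_zero_iff f hfinj).mpr (Polynomial.X_add_C_ne_zero 2)
    set u : Fin l → RatFunc ℂ := fun i => f (C (ξ i)) with hu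
    set v : Fin l → RatFunc ℂ := fun j => f (C (ξ' j)) with hv
    have hmat : (Matrix.charmatrix Cbar).map f
        = a • (1 : Matrix (Fin l) (Fin l) (RatFunc ℂ)) + Matrix.vecMulVec u v := by
      ext i j
      simp only [Matrix.map_apply, Matrix.add_apply, Matrix.smul_apply, Matrix.one_apply,
        Matrix.vecMulVec_apply, hu, hv, smul_eq_mul]
      by_cases h : i = j
      · subst h
        rw [Matrix.charmatrix_apply_eq, if_pos rfl]
        have hpoly : (X : ℂ[X]) - C (Cbar i i) = (X + C 2) + C (ξ i) * C (ξ' i) := by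
          have hC : Cbar i i = -(ξ i * ξ' i) - 2 := by simp [Cbar]
          rw [hC, C_sub, C_neg, C_mul]
          ring
        rw [hpoly, map_add, _root_.map_mul, mul_one]
      · rw [Matrix.charmatrix_apply_ne _ _ _ h, if_neg h]
        have hpoly : -C (Cbar i j) = C (ξ i) * C (ξ' j) := by
          have : Cbar i j = -(ξ i * ξ' j) := by simp [Cbar, h]
          rw [this, ← C_mul, map_neg, neg_neg]
        rw [hpoly, _root_.map_mul, mul_zero, zero_add]
    rw [RingHom.mapMatrix_apply, hmat, det_smul_one_add_vmv hl a ha u v]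
    have hdot : v ⬝ᵥ u = f (C (2 * (l : ℂ) - 1)) := by
      have h1 : v ⬝ᵥ u = ∑ x : Fin l, f (C (ξ' x * ξ x)) := by
        simp [dotProduct, hu, hv, ← _root_.map_mul]
      rw [h1, ← map_sum f (fun x => C (ξ' x * ξ x)) Finset.univ,
        ← map_sum C (fun x => ξ' x * ξ x) Finset.univ, hsum]
    rw [hdot, _root_.map_mul, map_pow]
    congr 1
    rw [ha_def, ← map_add]
    apply congrArg
    rw [add_assoc, ← C_add]
    congr 1
    push_cast
    ring_nf
end

section
/- Let D be a block matrix D = (D^{ij})_{1≤i,j≤l}, where D^{ij} is a 2n×2n circulant for 1 ≤ i,j ≤ l−1, D^{ll} is an n×n circulant, and for 1 ≤ i,j ≤ l−1 the mixed blocks satisfy D^{il} = (X_i; X_i) (stacked vertically) and D^{lj} = (Y_j Y_j) (side by side) with X_i, Y_j n×n circulants. For 0 ≤ k ≤ 2n−1 define the l×l matrix D̄_k by: d^{(k)}_{ij} = (D^{ij})^{(1)} z_{2n,k} for j ≤ l−1; and d^{(k)}_{il} = (D^{il})^{(1)} z_{n,k/2} if k is even, d^{(k)}_{il} = 0 if k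 is odd. Then the characteristic polynomial of D satisfies χ_D(t) = t^{−n} ∏_{k=0}^{2n−1} χ_{D̄_k}(t). -/
open Matrix Polynomial

namespace Stmt19Aux

lemma pow_mod {ω : ℂ} {N : ℕ} (hω : ω ^ N = 1) (a : ℕ) : ω ^ a = ω ^ (a % N) := by
  conv_lhs => rw [← Nat.div_add_mod a N]
  rw [pow_add, pow_mul, hω, one_pow, one_mul]

lemma pow_congr {ω : ℂ} {N : ℕ} (hω : ω ^ N = 1) {a b : ℕ} (h : a % N = b % N) :
    ω ^ a = ω ^ b := by rw [pow_mod hω a, pow_mod hω b, h]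

lemma circ_sum {N : ℕ} [NeZero N] (f : Fin N → Fin N → ℂ)
    (hf : ∀ s t, f s t = f 0 (t - s)) {ω : ℂ} (hω : ω ^ N = 1) (s : Fin N) :
    ∑ t, f s t * ω ^ (t : ℕ) = ω ^ (s : ℕ) * ∑ t, f 0 t * ω ^ (t : ℕ) := by
  rw [Finset.mul_sum]
  apply Fintype.sum_equiv (Equiv.subRight s)
  intro t
  rw [hf]
  have h1 : ω ^ (t : ℕ) = ω ^ (s : ℕ) * ω ^ ((t - s : Fin N) : ℕ) := by
    rw [← pow_add]
    refine pow_congr hω ?_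
    have h2 : ((s + (t - s) : Fin N) : ℕ) = ((s : ℕ) + ((t - s : Fin N) : ℕ)) % N :=
      Fin.val_add _ _
    rw [add_sub_cancel] at h2
    rw [Nat.mod_eq_of_lt t.isLt]
    exact h2
  rw [h1, Equiv.subRight_apply]
  ring

lemma sum_halves {n : ℕ} (hn : 0 < n) (g : Fin (2 * n) → ℂ) :
    ∑ t, g t = ∑ u : Fin n, g ⟨u, by omega⟩ + ∑ u : Fin n, g ⟨n + u, by omega⟩ := by
  have h := Fin.sum_univ_add (f := fun x : Fin (n + n) => g (finCongr (two_mul n).symm x))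
  rw [Equiv.sum_comp (finCongr (two_mul n).symm) g] at h
  rw [h]
  congr 1 <;> refine Finset.sum_congr rfl fun u _ => ?_ <;> exact congrArg g (Fin.ext (by simp))

lemma charpoly_eq {m : Type*} [Fintype m] [DecidableEq m]
    (M N P : Matrix m m ℂ) (hP : P.det ≠ 0) (h : M * P = P * N) :
    M.charpoly = N.charpoly := by
  have key : charmatrix M * P.map C = P.map C * charmatrix N := by
    rw [charmatrix, charmatrix, sub_mul, mul_sub]
    congr 1
    · exact (Matrix.scalar_commute (X : ℂ[X]) (fun r => Commute.all _ _) (P.map C)).eq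
    · rw [RingHom.mapMatrix_apply, RingHom.mapMatrix_apply, ← Matrix.map_mul, ← Matrix.map_mul, h]
  have hd := congrArg Matrix.det key
  rw [Matrix.det_mul, Matrix.det_mul, ← RingHom.mapMatrix_apply, ← RingHom.map_det] at hd
  have hC : (C P.det : ℂ[X]) ≠ 0 := fun hc => hP (by simpa using hc)
  rw [Matrix.charpoly, Matrix.charpoly]
  rw [mul_comm] at hd
  exact mul_left_cancel₀ hC hd

lemma charpoly_blockDiagonal {o m : Type*} [Fintype o] [DecidableEq o] [Fintype m]
    [DecidableEq m] (M : o → Matrix m m ℂ) :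
    (Matrix.blockDiagonal M).charpoly = ∏ k, (M k).charpoly := by
  simp only [Matrix.charpoly]
  rw [← Matrix.det_blockDiagonal]
  congr 1
  ext ⟨i, k⟩ ⟨j, k'⟩
  by_cases h : k = k'
  · subst h
    by_cases hij : i = j <;>
      simp [Matrix.charmatrix_apply, Matrix.blockDiagonal_apply, Matrix.diagonal_apply,
        hij, Prod.ext_iff]
  · simp [Matrix.charmatrix_apply, Matrix.blockDiagonal_apply, h, Matrix.diagonal_apply,
      Prod.ext_iff]

lemma charpoly_zero (n : ℕ) : (0 : Matrix (Fin n) (Fin n) ℂ).charpoly = X ^ n := by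
  have h : charmatrix (0 : Matrix (Fin n) (Fin n) ℂ) = Matrix.diagonal fun _ => X := by
    ext i j
    by_cases hij : i = j <;> simp [charmatrix_apply, hij]
  rw [Matrix.charpoly, h, Matrix.det_diagonal, Finset.prod_const, Finset.card_univ,
    Fintype.card_fin]

lemma pow_pow_comm (a : ℂ) (x y : ℕ) : (a ^ x) ^ y = (a ^ y) ^ x := by
  rw [← pow_mul, mul_comm, pow_mul]

end Stmt19Aux



/-- For the block matrix `D` with `2n × 2n` circulant blocks `D^{ij}` (`i,j ≤ l-1`), an
`n × n` circulant block `D^{ll}`, and mixed blocks `D^{il} = (X_i; X_i)` (stacked) and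
`D^{lj} = (Y_j Y_j)` (side by side) with `X_i, Y_j` circulant, the characteristic
polynomial of `D` satisfies `t^n · χ_D(t) = ∏_{k=0}^{2n-1} χ_{D̄_k}(t)`, where `D̄_k`
is the `l × l` matrix built from the first rows of the blocks dotted with `z_{2n,k}`
(resp. `z_{n,k/2}` for the last column when `k` is even, `0` when `k` is odd). -/
theorem stmt_19 (l n : ℕ) (hl : 1 ≤ l) (hn : 0 < n)
    (Dbig : Fin (l - 1) → Fin (l - 1) → Matrix (Fin (2 * n)) (Fin (2 * n)) ℂ)
    (Xm Ym : Fin (l - 1) → Matrix (Fin n) (Fin n) ℂ)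
    (Dll : Matrix (Fin n) (Fin n) ℂ)
    (hDbig : ∀ i j s t, Dbig i j s t = Dbig i j ⟨0, by omega⟩ (t - s))
    (hX : ∀ i s t, Xm i s t = Xm i ⟨0, hn⟩ (t - s))
    (hY : ∀ j s t, Ym j s t = Ym j ⟨0, hn⟩ (t - s))
    (hDll : ∀ s t, Dll s t = Dll ⟨0, hn⟩ (t - s))
    (ζ : ℂ) (hζ : IsPrimitiveRoot ζ (2 * n)) :
    let modn : Fin (2 * n) → Fin n := fun s => ⟨(s : ℕ) % n, Nat.mod_lt _ hn⟩
    let D : Matrix ((Fin (l - 1) × Fin (2 * n)) ⊕ Fin n)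
        ((Fin (l - 1) × Fin (2 * n)) ⊕ Fin n) ℂ :=
      Matrix.of fun p q =>
        match p, q with
        | Sum.inl (i, s), Sum.inl (j, t) => Dbig i j s t
        | Sum.inl (i, s), Sum.inr t => Xm i (modn s) t
        | Sum.inr s, Sum.inl (j, t) => Ym j s (modn t)
        | Sum.inr s, Sum.inr t => Dll s t
    let Dbar : Fin (2 * n) → Matrix (Fin (l - 1) ⊕ Unit) (Fin (l - 1) ⊕ Unit) ℂ :=
      fun k =>
      Matrix.of fun p q =>
        match p, q with
        | Sum.inl i, Sum.inl j =>
            ∑ t : Fin (2 * n), Dbig i j ⟨0, by omega⟩ t * ζ ^ ((t : ℕ) * (k : ℕ))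
        | Sum.inl i, Sum.inr _ =>
            if Even (k : ℕ) then
              ∑ t : Fin n, Xm i ⟨0, hn⟩ t * (ζ ^ 2) ^ ((t : ℕ) * ((k : ℕ) / 2))
            else 0
        | Sum.inr _, Sum.inl j =>
            ∑ t : Fin (2 * n), Ym j ⟨0, hn⟩ (modn t) * ζ ^ ((t : ℕ) * (k : ℕ))
        | Sum.inr _, Sum.inr _ =>
            if Even (k : ℕ) then
              ∑ t : Fin n, Dll ⟨0, hn⟩ t * (ζ ^ 2) ^ ((t : ℕ) * ((k : ℕ) / 2))
            else 0
    Polynomial.X ^ n * D.charpoly = ∏ k : Fin (2 * n), (Dbar k).charpoly := by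
  intro modn D Dbar
  haveI : NeZero n := ⟨hn.ne'⟩
  haveI : NeZero (2 * n) := ⟨by omega⟩
  have hζ1 : ζ ^ (2 * n) = 1 := hζ.pow_eq_one
  have hζ2 : IsPrimitiveRoot (ζ ^ 2) n := hζ.pow (by omega) (by ring)
  have hζ2n : (ζ ^ 2) ^ n = 1 := by rw [← pow_mul]; exact hζ1
  have hζn : ζ ^ n = -1 := by
    have h2 : (ζ ^ n) ^ 2 = 1 := by rw [← pow_mul, mul_comm]; exact hζ1
    have h1 : ζ ^ n ≠ 1 := by
      intro h
      have hd := (hζ.pow_eq_one_iff_dvd n).mp h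
      have := Nat.le_of_dvd hn hd
      omega
    have h3 : (ζ ^ n - 1) * (ζ ^ n + 1) = 0 := by linear_combination h2
    rcases mul_eq_zero.mp h3 with h | h
    · exact absurd (sub_eq_zero.mp h) h1
    · exact eq_neg_of_add_eq_zero_left h
  have hz2 : (⟨0, by omega⟩ : Fin (2 * n)) = 0 := Fin.ext (by simp)
  have hz1 : (⟨0, hn⟩ : Fin n) = 0 := Fin.ext (by simp)
  have hk2 : ∀ k : Fin (2 * n), (k : ℕ) / 2 < n := fun k => by have := k.isLt; omega
  have h2m : ∀ m : Fin n, 2 * (m : ℕ) < 2 * n := fun m => by have := m.isLt; omega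
  have h2m1 : ∀ m : Fin n, 2 * (m : ℕ) + 1 < 2 * n := fun m => by have := m.isLt; omega
  -- the change-of-basis matrix
  let P : Matrix ((Fin (l - 1) × Fin (2 * n)) ⊕ Fin n)
      ((Fin (l - 1) × Fin (2 * n)) ⊕ Fin n) ℂ :=
    Matrix.fromBlocks
      (Matrix.kroneckerMap (· * ·) (1 : Matrix (Fin (l - 1)) (Fin (l - 1)) ℂ)
        (Matrix.vandermonde fun s : Fin (2 * n) => ζ ^ (s : ℕ))) 0 0
      (Matrix.vandermonde fun s : Fin n => (ζ ^ 2) ^ (s : ℕ))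
  -- the reindexing equivalence
  let e : ((Fin (l - 1) ⊕ Unit) × Fin (2 * n)) ≃
      (((Fin (l - 1) × Fin (2 * n)) ⊕ Fin n) ⊕ Fin n) :=
    { toFun := fun p =>
        match p with
        | (Sum.inl i, k) => Sum.inl (Sum.inl (i, k))
        | (Sum.inr _, k) =>
            if (k : ℕ) % 2 = 0 then Sum.inl (Sum.inr ⟨(k : ℕ) / 2, hk2 k⟩)
            else Sum.inr ⟨(k : ℕ) / 2, hk2 k⟩
      invFun := fun q =>
        match q with
        | Sum.inl (Sum.inl (i, k)) => (Sum.inl i, k)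
        | Sum.inl (Sum.inr m) => (Sum.inr (), ⟨2 * (m : ℕ), h2m m⟩)
        | Sum.inr m => (Sum.inr (), ⟨2 * (m : ℕ) + 1, h2m1 m⟩)
      left_inv := by
        rintro ⟨p | u, k⟩
        · rfl
        · dsimp only
          by_cases h : (k : ℕ) % 2 = 0
          · rw [if_pos h]
            exact congrArg (fun z => (Sum.inr (), z))
              (Fin.ext (by omega : 2 * ((k : ℕ) / 2) = (k : ℕ)))
          · rw [if_neg h]
            exact congrArg (fun z => (Sum.inr (), z))
              (Fin.ext (by omega : 2 * ((k : ℕ) / 2) + 1 = (k : ℕ)))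
      right_inv := by
        rintro ((⟨i, k⟩ | m) | m)
        · rfl
        · dsimp only
          rw [if_pos (by omega : (2 * (m : ℕ)) % 2 = 0)]
          exact congrArg (fun z => Sum.inl (Sum.inr z))
            (Fin.ext (by omega : 2 * (m : ℕ) / 2 = (m : ℕ)))
        · dsimp only
          rw [if_neg (by omega : ¬(2 * (m : ℕ) + 1) % 2 = 0)]
          exact congrArg Sum.inr
            (Fin.ext (by omega : (2 * (m : ℕ) + 1) / 2 = (m : ℕ))) }
  let E : Matrix ((Fin (l - 1) × Fin (2 * n)) ⊕ Fin n)
      ((Fin (l - 1) × Fin (2 * n)) ⊕ Fin n) ℂ :=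
    ((Matrix.blockDiagonal Dbar).submatrix ⇑e.symm ⇑e.symm).toBlocks₁₁
  -- entry lemmas for P
  have hP11 : ∀ (i j : Fin (l - 1)) (s k : Fin (2 * n)),
      P (Sum.inl (i, s)) (Sum.inl (j, k)) =
        if i = j then (ζ ^ (k : ℕ)) ^ (s : ℕ) else 0 := by
    intro i j s k
    show (1 : Matrix (Fin (l - 1)) (Fin (l - 1)) ℂ) i j * (ζ ^ (s : ℕ)) ^ (k : ℕ) = _
    rw [Matrix.one_apply]
    split_ifs
    · rw [one_mul, Stmt19Aux.pow_pow_comm]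
    · rw [zero_mul]
  have hP12 : ∀ (i : Fin (l - 1)) (s : Fin (2 * n)) (m : Fin n),
      P (Sum.inl (i, s)) (Sum.inr m) = 0 := fun _ _ _ => rfl
  have hP21 : ∀ (s : Fin n) (j : Fin (l - 1)) (k : Fin (2 * n)),
      P (Sum.inr s) (Sum.inl (j, k)) = 0 := fun _ _ _ => rfl
  have hP22 : ∀ (s m : Fin n),
      P (Sum.inr s) (Sum.inr m) = ((ζ ^ 2) ^ (s : ℕ)) ^ (m : ℕ) := fun _ _ => rfl
  -- entry lemmas for D
  have hD11 : ∀ i s j t, D (Sum.inl (i, s)) (Sum.inl (j, t)) = Dbig i j s t :=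
    fun _ _ _ _ => rfl
  have hD12 : ∀ i s t, D (Sum.inl (i, s)) (Sum.inr t) = Xm i (modn s) t := fun _ _ _ => rfl
  have hD21 : ∀ s j t, D (Sum.inr s) (Sum.inl (j, t)) = Ym j s (modn t) := fun _ _ _ => rfl
  have hD22 : ∀ s t, D (Sum.inr s) (Sum.inr t) = Dll s t := fun _ _ => rfl
  -- entry lemmas for E
  have hE11 : ∀ (i j : Fin (l - 1)) (s' k : Fin (2 * n)),
      E (Sum.inl (i, s')) (Sum.inl (j, k)) =
        if s' = k then Dbar s' (Sum.inl i) (Sum.inl j) else 0 := by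
    intro i j s' k
    show Matrix.blockDiagonal Dbar (Sum.inl i, s') (Sum.inl j, k) = _
    rw [Matrix.blockDiagonal_apply]
  have hE12 : ∀ (i : Fin (l - 1)) (s' : Fin (2 * n)) (m : Fin n),
      E (Sum.inl (i, s')) (Sum.inr m) =
        if s' = (⟨2 * (m : ℕ), h2m m⟩ : Fin (2 * n)) then
          Dbar s' (Sum.inl i) (Sum.inr ()) else 0 := by
    intro i s' m
    show Matrix.blockDiagonal Dbar (Sum.inl i, s') (Sum.inr (), ⟨2 * (m : ℕ), h2m m⟩) = _
    rw [Matrix.blockDiagonal_apply]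
  have hE21 : ∀ (m' : Fin n) (j : Fin (l - 1)) (k : Fin (2 * n)),
      E (Sum.inr m') (Sum.inl (j, k)) =
        if (⟨2 * (m' : ℕ), h2m m'⟩ : Fin (2 * n)) = k then
          Dbar ⟨2 * (m' : ℕ), h2m m'⟩ (Sum.inr ()) (Sum.inl j) else 0 := by
    intro m' j k
    show Matrix.blockDiagonal Dbar (Sum.inr (), ⟨2 * (m' : ℕ), h2m m'⟩) (Sum.inl j, k) = _
    rw [Matrix.blockDiagonal_apply]
  have hE22 : ∀ (m' m : Fin n),
      E (Sum.inr m') (Sum.inr m) =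
        if (⟨2 * (m' : ℕ), h2m m'⟩ : Fin (2 * n)) = (⟨2 * (m : ℕ), h2m m⟩ : Fin (2 * n)) then
          Dbar ⟨2 * (m' : ℕ), h2m m'⟩ (Sum.inr ()) (Sum.inr ()) else 0 := by
    intro m' m
    show Matrix.blockDiagonal Dbar (Sum.inr (), ⟨2 * (m' : ℕ), h2m m'⟩)
      (Sum.inr (), ⟨2 * (m : ℕ), h2m m⟩) = _
    rw [Matrix.blockDiagonal_apply]
  -- Dbar entry normal forms
  have hDbar11 : ∀ (k : Fin (2 * n)) (i j : Fin (l - 1)),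
      Dbar k (Sum.inl i) (Sum.inl j) =
        ∑ t : Fin (2 * n), Dbig i j 0 t * (ζ ^ (k : ℕ)) ^ (t : ℕ) := by
    intro k i j
    show ∑ t : Fin (2 * n), Dbig i j ⟨0, by omega⟩ t * ζ ^ ((t : ℕ) * (k : ℕ)) = _
    exact Finset.sum_congr rfl fun t _ => by rw [hz2, pow_mul']
  have hDbar21 : ∀ (k : Fin (2 * n)) (j : Fin (l - 1)),
      Dbar k (Sum.inr ()) (Sum.inl j) =
        ∑ t : Fin (2 * n), Ym j 0 (modn t) * (ζ ^ (k : ℕ)) ^ (t : ℕ) := by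
    intro k j
    show ∑ t : Fin (2 * n), Ym j ⟨0, hn⟩ (modn t) * ζ ^ ((t : ℕ) * (k : ℕ)) = _
    exact Finset.sum_congr rfl fun t _ => by rw [hz1, pow_mul']
  have hDbar12 : ∀ (m : Fin n) (i : Fin (l - 1)),
      Dbar ⟨2 * (m : ℕ), h2m m⟩ (Sum.inl i) (Sum.inr ()) =
        ∑ t : Fin n, Xm i 0 t * ((ζ ^ 2) ^ (m : ℕ)) ^ (t : ℕ) := by
    intro m i
    show (if Even ((⟨2 * (m : ℕ), h2m m⟩ : Fin (2 * n)) : ℕ) then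
        ∑ t : Fin n, Xm i ⟨0, hn⟩ t *
          (ζ ^ 2) ^ ((t : ℕ) * (((⟨2 * (m : ℕ), h2m m⟩ : Fin (2 * n)) : ℕ) / 2))
      else 0) = _
    rw [if_pos ⟨(m : ℕ), (by omega : 2 * (m : ℕ) = (m : ℕ) + (m : ℕ))⟩]
    refine Finset.sum_congr rfl fun t _ => ?_
    rw [hz1]
    congr 1
    have hdv : ((⟨2 * (m : ℕ), h2m m⟩ : Fin (2 * n)) : ℕ) / 2 = (m : ℕ) := by
      simp only [Fin.val_mk]; omega
    rw [hdv, pow_mul']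
  have hDbar22 : ∀ (m : Fin n),
      Dbar ⟨2 * (m : ℕ), h2m m⟩ (Sum.inr ()) (Sum.inr ()) =
        ∑ t : Fin n, Dll 0 t * ((ζ ^ 2) ^ (m : ℕ)) ^ (t : ℕ) := by
    intro m
    show (if Even ((⟨2 * (m : ℕ), h2m m⟩ : Fin (2 * n)) : ℕ) then
        ∑ t : Fin n, Dll ⟨0, hn⟩ t *
          (ζ ^ 2) ^ ((t : ℕ) * (((⟨2 * (m : ℕ), h2m m⟩ : Fin (2 * n)) : ℕ) / 2))
      else 0) = _
    rw [if_pos ⟨(m : ℕ), (by omega : 2 * (m : ℕ) = (m : ℕ) + (m : ℕ))⟩]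
    refine Finset.sum_congr rfl fun t _ => ?_
    rw [hz1]
    congr 1
    have hdv : ((⟨2 * (m : ℕ), h2m m⟩ : Fin (2 * n)) : ℕ) / 2 = (m : ℕ) := by
      simp only [Fin.val_mk]; omega
    rw [hdv, pow_mul']
  -- mod helpers
  have hm1 : ∀ (u : Fin n) (h : (u : ℕ) < 2 * n), modn ⟨(u : ℕ), h⟩ = u :=
    fun u h => Fin.ext (Nat.mod_eq_of_lt u.isLt)
  have hm2 : ∀ (u : Fin n) (h : n + (u : ℕ) < 2 * n), modn ⟨n + (u : ℕ), h⟩ = u := by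
    intro u h
    refine Fin.ext ?_
    show (n + (u : ℕ)) % n = (u : ℕ)
    rw [Nat.add_mod_left]
    exact Nat.mod_eq_of_lt u.isLt
  -- the key intertwining identity
  have hmul : D * P = P * E := by
    apply Matrix.ext
    rintro (⟨i, s⟩ | s) (⟨j, k⟩ | m) <;>
      simp only [Matrix.mul_apply, Fintype.sum_sum_type, Fintype.sum_prod_type, hD11, hD12,
        hD21, hD22, hP11, hP12, hP21, hP22, hE11, hE12, hE21, hE22, mul_ite, ite_mul,
        mul_zero, zero_mul, mul_one, one_mul, Finset.sum_const_zero, add_zero, zero_add,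
        Finset.sum_ite_irrel, Finset.sum_ite_eq, Finset.sum_ite_eq', Finset.mem_univ,
        if_true, ite_self, Fin.val_mk]
    -- Case 1 : rows (i,s), columns (j,k)
    · rw [hDbar11 k i j]
      have hωk : (ζ ^ (k : ℕ)) ^ (2 * n) = 1 := by
        rw [Stmt19Aux.pow_pow_comm, hζ1, one_pow]
      have hcirc := Stmt19Aux.circ_sum (fun a b => Dbig i j a b)
        (fun a b => by show Dbig i j a b = Dbig i j 0 (b - a); rw [hDbig i j a b, hz2]) hωk s
      simp only [hcirc]
    -- Case 2 : rows (i,s), column m (last block)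
    · rw [hDbar12 m i]
      have hL : ∑ t : Fin n, Xm i (modn s) t * ((ζ ^ 2) ^ (t : ℕ)) ^ (m : ℕ) =
          ∑ t : Fin n, Xm i (modn s) t * ((ζ ^ 2) ^ (m : ℕ)) ^ (t : ℕ) :=
        Finset.sum_congr rfl fun t _ => by
          congr 1
          exact Stmt19Aux.pow_pow_comm (ζ ^ 2) (t : ℕ) (m : ℕ)
      rw [hL]
      have hω : ((ζ ^ 2) ^ (m : ℕ)) ^ n = 1 := by
        rw [Stmt19Aux.pow_pow_comm, hζ2n, one_pow]
      have hcirc := Stmt19Aux.circ_sum (fun a b => Xm i a b)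
        (fun a b => by show Xm i a b = Xm i 0 (b - a); rw [hX i a b, hz1]) hω (modn s)
      simp only [hcirc]
      congr 1
      show ((ζ ^ 2) ^ (m : ℕ)) ^ ((s : ℕ) % n) = (ζ ^ (2 * (m : ℕ))) ^ (s : ℕ)
      have e1 : ((ζ ^ 2) ^ (m : ℕ)) ^ ((s : ℕ) % n) = ζ ^ (2 * ((m : ℕ) * ((s : ℕ) % n))) := by
        rw [← pow_mul, ← pow_mul]
      have e2 : (ζ ^ (2 * (m : ℕ))) ^ (s : ℕ) = ζ ^ (2 * (m : ℕ) * (s : ℕ)) := by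
        rw [← pow_mul]
      rw [e1, e2]
      apply Stmt19Aux.pow_congr hζ1
      have hdm : 2 * (m : ℕ) * (s : ℕ) =
          2 * ((m : ℕ) * ((s : ℕ) % n)) + (2 * n) * ((m : ℕ) * ((s : ℕ) / n)) := by
        conv_lhs => rw [← Nat.div_add_mod (s : ℕ) n]
        ring
      rw [hdm, Nat.add_mul_mod_self_left]
    -- Case 3 : row s (last block), columns (j,k)
    · rcases Nat.even_or_odd (k : ℕ) with hek | hok
      · obtain ⟨c, hc⟩ := hek
        have hcn : c < n := by have := k.isLt; omega
        have hck : (⟨2 * ((⟨c, hcn⟩ : Fin n) : ℕ), h2m ⟨c, hcn⟩⟩ : Fin (2 * n)) = k := by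
          refine Fin.ext ?_
          simp only [Fin.val_mk]
          omega
        have hcond : ∀ m' : Fin n,
            ((⟨2 * (m' : ℕ), h2m m'⟩ : Fin (2 * n)) = k) = (m' = ⟨c, hcn⟩) := by
          intro m'
          apply propext
          constructor
          · intro h
            have hv := congrArg Fin.val h
            simp only [Fin.val_mk] at hv
            exact Fin.ext (by simp only [Fin.val_mk]; omega)
          · rintro rfl
            exact hck
        simp only [hcond, Finset.sum_ite_eq', Finset.mem_univ, if_true]
        rw [hck, hDbar21 k j]
        rw [Stmt19Aux.sum_halves hn (fun t => Ym j s (modn t) * (ζ ^ (k : ℕ)) ^ (t : ℕ)),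
            Stmt19Aux.sum_halves hn (fun t => Ym j 0 (modn t) * (ζ ^ (k : ℕ)) ^ (t : ℕ))]
        have hkn1 : (ζ ^ (k : ℕ)) ^ n = 1 := by
          rw [Stmt19Aux.pow_pow_comm, hζn]
          exact Even.neg_one_pow ⟨c, hc⟩
        simp only [hm1, hm2, Fin.val_mk, pow_add, hkn1, one_mul]
        have hcirc := Stmt19Aux.circ_sum (fun a b => Ym j a b)
          (fun a b => by show Ym j a b = Ym j 0 (b - a); rw [hY j a b, hz1]) hkn1 s
        simp only [hcirc]
        have hcoef : ((ζ ^ 2) ^ (s : ℕ)) ^ ((⟨c, hcn⟩ : Fin n) : ℕ) = (ζ ^ (k : ℕ)) ^ (s : ℕ) := by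
          show ((ζ ^ 2) ^ (s : ℕ)) ^ c = _
          have e1 : ((ζ ^ 2) ^ (s : ℕ)) ^ c = ζ ^ (2 * ((s : ℕ) * c)) := by
            rw [← pow_mul, ← pow_mul]
          have e2 : (ζ ^ (k : ℕ)) ^ (s : ℕ) = ζ ^ ((k : ℕ) * (s : ℕ)) := by
            rw [← pow_mul]
          rw [e1, e2]
          congr 1
          rw [hc]
          ring
        rw [hcoef]
        ring
      · have hnone : ∀ m' : Fin n,
            ((⟨2 * (m' : ℕ), h2m m'⟩ : Fin (2 * n)) = k) = False := by
          intro m'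
          apply propext
          refine iff_false_intro fun h => ?_
          have hv := congrArg Fin.val h
          simp only [Fin.val_mk] at hv
          obtain ⟨c, hc⟩ := hok
          omega
        simp only [hnone, if_false, Finset.sum_const_zero]
        rw [Stmt19Aux.sum_halves hn (fun t => Ym j s (modn t) * (ζ ^ (k : ℕ)) ^ (t : ℕ))]
        have hkn1 : (ζ ^ (k : ℕ)) ^ n = -1 := by
          rw [Stmt19Aux.pow_pow_comm, hζn]
          exact Odd.neg_one_pow hok
        simp only [hm1, hm2, Fin.val_mk, pow_add, hkn1]
        rw [← Finset.sum_add_distrib]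
        apply Finset.sum_eq_zero
        intro u _
        ring
    -- Case 4 : row s, column m
    · have hcond4 : ∀ m' : Fin n,
          ((⟨2 * (m' : ℕ), h2m m'⟩ : Fin (2 * n)) = (⟨2 * (m : ℕ), h2m m⟩ : Fin (2 * n))) =
            (m' = m) := by
        intro m'
        apply propext
        constructor
        · intro h
          have hv := congrArg Fin.val h
          simp only [Fin.val_mk] at hv
          exact Fin.ext (by omega)
        · rintro rfl
          rfl
      simp only [hcond4, Finset.sum_ite_eq', Finset.mem_univ, if_true]
      rw [hDbar22 m]
      have hL : ∑ t : Fin n, Dll s t * ((ζ ^ 2) ^ (t : ℕ)) ^ (m : ℕ) =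
          ∑ t : Fin n, Dll s t * ((ζ ^ 2) ^ (m : ℕ)) ^ (t : ℕ) :=
        Finset.sum_congr rfl fun t _ => by
          congr 1
          exact Stmt19Aux.pow_pow_comm (ζ ^ 2) (t : ℕ) (m : ℕ)
      rw [hL]
      have hω : ((ζ ^ 2) ^ (m : ℕ)) ^ n = 1 := by
        rw [Stmt19Aux.pow_pow_comm, hζ2n, one_pow]
      have hcirc := Stmt19Aux.circ_sum (fun a b => Dll a b)
        (fun a b => by show Dll a b = Dll 0 (b - a); rw [hDll a b, hz1]) hω s
      simp only [hcirc]
      congr 1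
      exact Stmt19Aux.pow_pow_comm (ζ ^ 2) (m : ℕ) (s : ℕ)
  -- invertibility of P
  have hdetP : P.det ≠ 0 := by
    have hVdet : (Matrix.vandermonde fun s : Fin (2 * n) => ζ ^ (s : ℕ)).det ≠ 0 := by
      rw [Ne, Matrix.det_vandermonde_eq_zero_iff]
      rintro ⟨i, j, hij, hne⟩
      exact hne (Fin.ext (hζ.pow_inj i.isLt j.isLt hij))
    have hBdet : (Matrix.vandermonde fun s : Fin n => (ζ ^ 2) ^ (s : ℕ)).det ≠ 0 := by
      rw [Ne, Matrix.det_vandermonde_eq_zero_iff]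
      rintro ⟨i, j, hij, hne⟩
      exact hne (Fin.ext (hζ2.pow_inj i.isLt j.isLt hij))
    show (Matrix.fromBlocks _ _ _ _).det ≠ 0
    rw [Matrix.det_fromBlocks_zero₂₁, Matrix.det_kronecker, Matrix.det_one, one_pow, one_mul]
    exact mul_ne_zero (pow_ne_zero _ hVdet) hBdet
  -- zero columns of the reindexed block diagonal matrix
  have hcol0 : ∀ (x) (m : Fin n),
      (Matrix.blockDiagonal Dbar).submatrix (⇑e.symm) (⇑e.symm) x (Sum.inr m) = 0 := by
    intro x m
    rw [Matrix.submatrix_apply,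
      show e.symm (Sum.inr m) = (Sum.inr (), ⟨2 * (m : ℕ) + 1, h2m1 m⟩) from rfl]
    obtain ⟨p, kk⟩ := e.symm x
    rw [Matrix.blockDiagonal_apply']
    split_ifs with h
    · subst h
      have hodd1 : ¬ Even ((⟨2 * (m : ℕ) + 1, h2m1 m⟩ : Fin (2 * n)) : ℕ) := by
        rintro ⟨r, hr⟩
        simp only [Fin.val_mk] at hr
        omega
      cases p with
      | inl i => exact if_neg hodd1
      | inr u => exact if_neg hodd1
    · rfl
  have hF : (Matrix.blockDiagonal Dbar).submatrix (⇑e.symm) (⇑e.symm) =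
      Matrix.fromBlocks E 0
        ((Matrix.blockDiagonal Dbar).submatrix (⇑e.symm) (⇑e.symm)).toBlocks₂₁ 0 := by
    apply Matrix.ext
    rintro (p | a) (q | b)
    · rfl
    · rw [Matrix.fromBlocks_apply₁₂, Matrix.zero_apply]; exact hcol0 _ b
    · rfl
    · rw [Matrix.fromBlocks_apply₂₂, Matrix.zero_apply]; exact hcol0 _ b
  have hsplit : ((Matrix.blockDiagonal Dbar).submatrix (⇑e.symm) (⇑e.symm)).charpoly =
      E.charpoly * Polynomial.X ^ n := by
    conv_lhs => rw [hF]
    rw [Matrix.charpoly_fromBlocks_zero₁₂, Stmt19Aux.charpoly_zero]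
  have step1 : (∏ k : Fin (2 * n), (Dbar k).charpoly) =
      ((Matrix.blockDiagonal Dbar).submatrix (⇑e.symm) (⇑e.symm)).charpoly := by
    rw [← Stmt19Aux.charpoly_blockDiagonal, ← Matrix.reindex_apply, Matrix.charpoly_reindex]
  have hDE : D.charpoly = E.charpoly := Stmt19Aux.charpoly_eq D E P hdetP hmul
  rw [hDE, step1, hsplit]
  ring
end
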